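/- arXiv:1312.7555 — 8 statements merged into one kernel-verified Lean document; each statement's English description precedes it below -/
import Mathlib

section
/- For every integer m ≥ 4, we have 1 + ⌊√(2(m - ⌊√(2m)⌋ - 2))⌋ ≤ ⌊√(2m)⌋. -/
theorem stmt_0 (m : ℤ) (hm : 4 ≤ m) :
    1 + ⌊Real.sqrt (2 * ((m : ℝ) - ⌊Real.sqrt (2 * (m : ℝ))⌋ - 2))⌋ ≤
      ⌊Real.sqrt (2 * (m : ℝ))⌋ := by
  set k : ℤ := ⌊Real.sqrt (2 * (m : ℝ))⌋ with hk
  have hmR : (4 : ℝ) ≤ (m : ℝ) := by exact_mod_cast hm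
  have h2m : (0 : ℝ) ≤ 2 * (m : ℝ) := by linarith
  have hk2 : (2 : ℤ) ≤ k := by
    rw [hk]
    apply Int.le_floor.2
    push_cast
    have h1 := Real.sq_sqrt h2m
    nlinarith [Real.sqrt_nonneg (2 * (m : ℝ))]
  have hkR : (0 : ℝ) < (k : ℝ) := by exact_mod_cast (by omega : (0:ℤ) < k)
  -- √(2m) < k+1 gives 2m < (k+1)^2
  have hlt : Real.sqrt (2 * (m : ℝ)) < (k : ℝ) + 1 := Int.lt_floor_add_one _
  have hsq : 2 * (m : ℝ) < ((k : ℝ) + 1) ^ 2 := by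
    have := Real.sq_sqrt h2m
    nlinarith [Real.sqrt_nonneg (2 * (m : ℝ))]
  have hint : 2 * m ≤ k ^ 2 + 2 * k := by
    have : (2 * m : ℤ) < (k + 1) ^ 2 := by exact_mod_cast (by push_cast; linarith : ((2*m : ℤ) : ℝ) < ((k+1 : ℤ) : ℝ)^2)
    nlinarith
  have hintR : 2 * ((m : ℝ) - (k : ℝ) - 2) < (k : ℝ) ^ 2 := by
    have : ((2 * m : ℤ) : ℝ) ≤ ((k ^ 2 + 2 * k : ℤ) : ℝ) := by exact_mod_cast hint
    push_cast at this
    linarith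
  have hmain : Real.sqrt (2 * ((m : ℝ) - (k : ℝ) - 2)) < (k : ℝ) :=
    (Real.sqrt_lt' hkR).2 hintR
  have : ⌊Real.sqrt (2 * ((m : ℝ) - (k : ℝ) - 2))⌋ < k := by
    apply Int.floor_lt.2
    exact_mod_cast hmain
  omega
end

section
/- Let H be a k-uniform hypergraph with n vertices and m edges, where k ≥ 1. Then the transversal number τ(H) satisfies τ(H) ≤ (⌊k/2⌋·m + n)/⌊3k/2⌋. -/
open Finset

namespace CMaux

variable {V : Type*} [DecidableEq V]

lemma sum_insert_le' (s : Finset (Finset V)) (a : Finset V) (f : Finset V → ℕ) :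
    ∑ x ∈ insert a s, f x ≤ f a + ∑ x ∈ s, f x := by
  by_cases h : a ∈ s
  · rw [Finset.insert_eq_self.2 h]; exact Nat.le_add_left _ _
  · rw [Finset.sum_insert h]

/-- double counting incidences between edges and a vertex set `M`. -/
lemma double_count (E : Finset (Finset V)) (M : Finset V) :
    ∑ e ∈ E, (e ∩ M).card = ∑ v ∈ M, (E.filter (fun e => v ∈ e)).card := by
  have h1 : ∀ e : Finset V, (e ∩ M).card = ∑ v ∈ M, (if v ∈ e then 1 else 0) := by
    intro e
    rw [inter_comm, ← Finset.filter_mem_eq_inter, Finset.card_filter]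
  have h2 : ∀ v : V, (E.filter (fun e => v ∈ e)).card = ∑ e ∈ E, (if v ∈ e then 1 else 0) := by
    intro v; rw [Finset.card_filter]
  simp_rw [h1, h2]
  exact Finset.sum_comm

end CMaux

namespace CMaux

lemma key {V : Type*} [DecidableEq V] (k : ℕ) (hk : 1 ≤ k) :
    ∀ N (E : Finset (Finset V)), (∑ e ∈ E, e.card ≤ N) →
      (∀ e ∈ E, 1 ≤ e.card) → (∀ e ∈ E, e.card ≤ k) →
      ∃ T : Finset V, (∀ e ∈ E, (e ∩ T).Nonempty) ∧
        (k + k/2) * T.card ≤ (∑ e ∈ E, (k + k/2 - e.card)) + (E.biUnion id).card := by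
  intro N
  induction N using Nat.strong_induction_on with
  | _ N IH =>
    intro E hN h1 hsk
    classical
    by_cases hE : E = ∅
    · exact ⟨∅, by simp [hE], by simp [hE]⟩
    replace hE : E.Nonempty := Finset.nonempty_iff_ne_empty.2 hE
    -- generic "add one vertex x to the transversal" move
    have move : ∀ x : V, x ∈ E.biUnion id →
        (k + k/2) + ((∑ e ∈ E.filter (fun e => x ∉ e), (k + k/2 - e.card)) +
            ((E.filter (fun e => x ∉ e)).biUnion id).card) ≤
          (∑ e ∈ E, (k + k/2 - e.card)) + (E.biUnion id).card →
        ∃ T : Finset V, (∀ e ∈ E, (e ∩ T).Nonempty) ∧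
          (k + k/2) * T.card ≤ (∑ e ∈ E, (k + k/2 - e.card)) + (E.biUnion id).card := by
      intro x hxU hnum
      set E' := E.filter (fun e => x ∉ e) with hE'
      obtain ⟨e₀, he₀E, hxe₀⟩ := Finset.mem_biUnion.1 hxU
      have hsubE : E' ⊆ E := Finset.filter_subset _ _
      have hxe₀' : e₀ ∉ E' := fun h => (Finset.mem_filter.1 h).2 hxe₀
      have hmeas : ∑ e ∈ E', e.card < ∑ e ∈ E, e.card :=
        Finset.sum_lt_sum_of_subset hsubE he₀E hxe₀' (h1 e₀ he₀E) (fun _ _ _ => Nat.zero_le _)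
      obtain ⟨T', hT'1, hT'2⟩ := IH (∑ e ∈ E', e.card) (lt_of_lt_of_le hmeas hN) E' le_rfl
        (fun e he => h1 e (hsubE he)) (fun e he => hsk e (hsubE he))
      refine ⟨insert x T', ?_, ?_⟩
      · intro e he
        by_cases hxe : x ∈ e
        · exact ⟨x, Finset.mem_inter.2 ⟨hxe, Finset.mem_insert_self _ _⟩⟩
        · obtain ⟨y, hy⟩ := hT'1 e (Finset.mem_filter.2 ⟨he, hxe⟩)
          exact ⟨y, Finset.mem_inter.2 ⟨(Finset.mem_inter.1 hy).1,
            Finset.mem_insert_of_mem (Finset.mem_inter.1 hy).2⟩⟩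
      · calc (k + k/2) * (insert x T').card ≤ (k + k/2) * (T'.card + 1) := by
              exact Nat.mul_le_mul_left _ (Finset.card_insert_le _ _)
          _ = (k + k/2) + (k + k/2) * T'.card := by ring
          _ ≤ (k + k/2) + ((∑ e ∈ E', (k + k/2 - e.card)) + (E'.biUnion id).card) := by
              exact Nat.add_le_add_left hT'2 _
          _ ≤ _ := hnum
    -- basic facts for filtered sums, used by several cases
    have hsplit : ∀ x : V, (∑ e ∈ E.filter (fun e => x ∈ e), (k + k/2 - e.card)) +
        (∑ e ∈ E.filter (fun e => x ∉ e), (k + k/2 - e.card)) =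
        ∑ e ∈ E, (k + k/2 - e.card) := fun x =>
      Finset.sum_filter_add_sum_filter_not E (fun e => x ∈ e) _
    have hUdrop : ∀ x : V, x ∈ E.biUnion id →
        ((E.filter (fun e => x ∉ e)).biUnion id).card + 1 ≤ (E.biUnion id).card := by
      intro x hxU
      have hsub : (E.filter (fun e => x ∉ e)).biUnion id ⊆ (E.biUnion id).erase x := by
        intro v hv
        obtain ⟨g, hg, hvg⟩ := Finset.mem_biUnion.1 hv
        have hgE := Finset.mem_filter.1 hg
        refine Finset.mem_erase.2 ⟨?_, Finset.mem_biUnion.2 ⟨g, hgE.1, hvg⟩⟩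
        rintro rfl; exact hgE.2 hvg
      have h2 := Finset.card_le_card hsub
      rw [Finset.card_erase_of_mem hxU] at h2
      have hU1 : 1 ≤ (E.biUnion id).card := Finset.card_pos.2 ⟨x, hxU⟩
      omega
    -- Case (b) : an edge of size 1
    by_cases hb : ∃ e ∈ E, e.card = 1
    · obtain ⟨e₀, he₀E, he₀1⟩ := hb
      obtain ⟨x, rfl⟩ := Finset.card_eq_one.1 he₀1
      have hxU : x ∈ E.biUnion id := Finset.mem_biUnion.2 ⟨{x}, he₀E, Finset.mem_singleton_self x⟩
      apply move x hxU
      have hD : (k + k/2) - 1 ≤ ∑ e ∈ E.filter (fun e => x ∈ e), (k + k/2 - e.card) := by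
        have hmem : ({x} : Finset V) ∈ E.filter (fun e => x ∈ e) :=
          Finset.mem_filter.2 ⟨he₀E, Finset.mem_singleton_self x⟩
        have := Finset.single_le_sum (f := fun e => (k + k/2 - e.card))
          (fun i _ => Nat.zero_le _) hmem
        simpa using this
      have h2 := hsplit x
      have h3 := hUdrop x hxU
      omega
    push_neg at hb
    have h2card : ∀ e ∈ E, 2 ≤ e.card := by
      intro e he
      have := h1 e he; have := hb e he; omega
    -- Case (c) : a vertex of degree 1
    by_cases hc : ∃ x, (E.filter (fun e => x ∈ e)).card = 1
    · obtain ⟨x, hx1⟩ := hc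
      obtain ⟨e₀, he₀⟩ := Finset.card_eq_one.1 hx1
      have he₀E : e₀ ∈ E ∧ x ∈ e₀ := by
        have : e₀ ∈ E.filter (fun e => x ∈ e) := he₀ ▸ Finset.mem_singleton_self e₀
        exact Finset.mem_filter.1 this
      have huniq : ∀ g ∈ E, x ∈ g → g = e₀ := by
        intro g hg hxg
        have : g ∈ E.filter (fun e => x ∈ e) := Finset.mem_filter.2 ⟨hg, hxg⟩
        rw [he₀] at this; exact Finset.mem_singleton.1 this
      set E' : Finset (Finset V) := insert (e₀.erase x) (E.erase e₀) with hE'def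
      have hcarde₀ : 2 ≤ e₀.card := h2card e₀ he₀E.1
      have hcardek : e₀.card ≤ k := hsk e₀ he₀E.1
      have herase_card : (e₀.erase x).card = e₀.card - 1 := Finset.card_erase_of_mem he₀E.2
      -- measure decreases
      have hmeas : ∑ e ∈ E', e.card < ∑ e ∈ E, e.card := by
        have hle : ∑ e ∈ E', e.card ≤ (e₀.erase x).card + ∑ e ∈ E.erase e₀, e.card :=
          sum_insert_le' _ _ _
        have heq : e₀.card + ∑ e ∈ E.erase e₀, e.card = ∑ e ∈ E, e.card :=
          Finset.add_sum_erase E (fun e => e.card) he₀E.1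
        omega
      obtain ⟨T', hT'1, hT'2⟩ := IH (∑ e ∈ E', e.card) (lt_of_lt_of_le hmeas hN) E' le_rfl
        (fun e he => by
          rcases Finset.mem_insert.1 he with rfl | he
          · omega
          · exact h1 e (Finset.mem_of_mem_erase he))
        (fun e he => by
          rcases Finset.mem_insert.1 he with rfl | he
          · omega
          · exact hsk e (Finset.mem_of_mem_erase he))
      refine ⟨T', ?_, ?_⟩
      · intro e he
        by_cases heq : e = e₀
        · subst heq
          obtain ⟨y, hy⟩ := hT'1 (e.erase x) (Finset.mem_insert_self _ _)
          rw [Finset.mem_inter] at hy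
          exact ⟨y, Finset.mem_inter.2 ⟨Finset.mem_of_mem_erase hy.1, hy.2⟩⟩
        · exact hT'1 e (Finset.mem_insert_of_mem (Finset.mem_erase.2 ⟨heq, he⟩))
      · -- weight accounting
        have hwle : ∑ e ∈ E', (k + k/2 - e.card) ≤
            (k + k/2 - (e₀.card - 1)) + ∑ e ∈ E.erase e₀, (k + k/2 - e.card) := by
          have := sum_insert_le' (E.erase e₀) (e₀.erase x) (fun e => (k + k/2 - e.card))
          rwa [herase_card] at this
        have hweq : (k + k/2 - e₀.card) + ∑ e ∈ E.erase e₀, (k + k/2 - e.card) =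
            ∑ e ∈ E, (k + k/2 - e.card) :=
          Finset.add_sum_erase E (fun e => (k + k/2 - e.card)) he₀E.1
        have hxU : x ∈ E.biUnion id := Finset.mem_biUnion.2 ⟨e₀, he₀E.1, he₀E.2⟩
        have hUsub : E'.biUnion id ⊆ (E.biUnion id).erase x := by
          intro v hv
          obtain ⟨g, hg, hvg⟩ := Finset.mem_biUnion.1 hv
          rcases Finset.mem_insert.1 hg with heq | hg2
          · subst heq
            refine Finset.mem_erase.2 ⟨(Finset.mem_erase.1 hvg).1,
              Finset.mem_biUnion.2 ⟨e₀, he₀E.1, Finset.mem_of_mem_erase hvg⟩⟩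
          · have hgE := Finset.mem_of_mem_erase hg2
            refine Finset.mem_erase.2 ⟨?_, Finset.mem_biUnion.2 ⟨g, hgE, hvg⟩⟩
            rintro rfl
            exact (Finset.mem_erase.1 hg2).1 (huniq g hgE hvg)
        have hUle := Finset.card_le_card hUsub
        rw [Finset.card_erase_of_mem hxU] at hUle
        have hU1 : 1 ≤ (E.biUnion id).card := Finset.card_pos.2 ⟨x, hxU⟩
        omega
    push_neg at hc
    -- Case (d) : a vertex of degree ≥ 3
    by_cases hd : ∃ x, 3 ≤ (E.filter (fun e => x ∈ e)).card
    · obtain ⟨x, hx3⟩ := hd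
      have hDne : (E.filter (fun e => x ∈ e)).Nonempty := Finset.card_pos.1 (by omega)
      obtain ⟨e₀, he₀⟩ := hDne
      have he₀' := Finset.mem_filter.1 he₀
      have hxU : x ∈ E.biUnion id := Finset.mem_biUnion.2 ⟨e₀, he₀'.1, he₀'.2⟩
      apply move x hxU
      have hD : (E.filter (fun e => x ∈ e)).card • (k/2) ≤
          ∑ e ∈ E.filter (fun e => x ∈ e), (k + k/2 - e.card) := by
        apply Finset.card_nsmul_le_sum
        intro e he
        have := hsk e (Finset.mem_filter.1 he).1
        omega
      rw [smul_eq_mul] at hD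
      have hD3 : 3 * (k/2) ≤ ∑ e ∈ E.filter (fun e => x ∈ e), (k + k/2 - e.card) := by
        calc 3 * (k/2) ≤ (E.filter (fun e => x ∈ e)).card * (k/2) :=
              Nat.mul_le_mul_right _ hx3
          _ ≤ _ := hD
      have h2 := hsplit x
      have h3 := hUdrop x hxU
      omega
    push_neg at hd
    have hdeg2 : ∀ v ∈ E.biUnion id, (E.filter (fun e => v ∈ e)).card = 2 := by
      intro v hv
      obtain ⟨g, hg, hvg⟩ := Finset.mem_biUnion.1 hv
      have hge1 : 1 ≤ (E.filter (fun e => v ∈ e)).card :=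
        Finset.card_pos.2 ⟨g, Finset.mem_filter.2 ⟨hg, hvg⟩⟩
      have := hc v; have := hd v; omega
    -- Case (f) : two intersecting edges with small union
    by_cases hf : ∃ e ∈ E, ∃ f ∈ E, e ≠ f ∧ (e ∩ f).Nonempty ∧ (e ∪ f).card ≤ k + k/2
    · obtain ⟨e, heE, f, hfE, hef, ⟨x, hx⟩, hcup⟩ := hf
      rw [Finset.mem_inter] at hx
      have hxU : x ∈ E.biUnion id := Finset.mem_biUnion.2 ⟨e, heE, hx.1⟩
      apply move x hxU
      -- the filter of edges through x is exactly {e, f}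
      have hDx : E.filter (fun g => x ∈ g) = {e, f} := by
        apply Finset.eq_of_subset_of_card_le
        · intro g hg
          have hg' := Finset.mem_filter.1 hg
          by_contra hgef
          rw [Finset.mem_insert, Finset.mem_singleton] at hgef
          push_neg at hgef
          have hsub : ({e, f, g} : Finset (Finset V)) ⊆ E.filter (fun g => x ∈ g) := by
            intro h hh
            simp only [Finset.mem_insert, Finset.mem_singleton] at hh
            rcases hh with rfl | rfl | rfl
            · exact Finset.mem_filter.2 ⟨heE, hx.1⟩
            · exact Finset.mem_filter.2 ⟨hfE, hx.2⟩
            · exact hg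
          have hc3 : ({e, f, g} : Finset (Finset V)).card = 3 := by
            rw [Finset.card_insert_of_notMem (by simp [hef, hgef.1.symm]),
              Finset.card_insert_of_notMem (by simp [hgef.2.symm]), Finset.card_singleton]
          have := Finset.card_le_card hsub
          rw [hc3, hdeg2 x hxU] at this; omega
        · rw [hdeg2 x hxU]
          exact le_trans (Finset.card_insert_le _ _) (by simp)
      have hsum : ∑ g ∈ E.filter (fun g => x ∈ g), (k + k/2 - g.card) =
          (k + k/2 - e.card) + (k + k/2 - f.card) := by
        rw [hDx, Finset.sum_pair hef]
      -- e ∩ f disappears from the union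
      have hdrop : ((E.filter (fun g => x ∉ g)).biUnion id).card + (e ∩ f).card ≤
          (E.biUnion id).card := by
        have hdisj : Disjoint ((E.filter (fun g => x ∉ g)).biUnion id) (e ∩ f) := by
          rw [Finset.disjoint_right]
          intro v hv hv'
          obtain ⟨g, hg, hvg⟩ := Finset.mem_biUnion.1 hv'
          have hg' := Finset.mem_filter.1 hg
          have hvU : v ∈ E.biUnion id := Finset.mem_biUnion.2 ⟨g, hg'.1, hvg⟩
          rw [Finset.mem_inter] at hv
          have hgef : g ≠ e ∧ g ≠ f := by
            constructor <;> rintro rfl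
            · exact hg'.2 hx.1
            · exact hg'.2 hx.2
          have hsub : ({e, f, g} : Finset (Finset V)) ⊆ E.filter (fun h => v ∈ h) := by
            intro h hh
            simp only [Finset.mem_insert, Finset.mem_singleton] at hh
            rcases hh with rfl | rfl | rfl
            · exact Finset.mem_filter.2 ⟨heE, hv.1⟩
            · exact Finset.mem_filter.2 ⟨hfE, hv.2⟩
            · exact Finset.mem_filter.2 ⟨hg'.1, hvg⟩
          have hc3 : ({e, f, g} : Finset (Finset V)).card = 3 := by
            rw [Finset.card_insert_of_notMem (by simp [hef, hgef.1.symm]),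
              Finset.card_insert_of_notMem (by simp [hgef.2.symm]), Finset.card_singleton]
          have := Finset.card_le_card hsub
          rw [hc3, hdeg2 v hvU] at this; omega
        have hsubU : ((E.filter (fun g => x ∉ g)).biUnion id) ∪ (e ∩ f) ⊆ E.biUnion id := by
          apply Finset.union_subset
          · exact Finset.biUnion_subset_biUnion_of_subset_left _ (Finset.filter_subset _ _)
          · intro v hv
            exact Finset.mem_biUnion.2 ⟨e, heE, (Finset.mem_inter.1 hv).1⟩
        have := Finset.card_le_card hsubU
        rwa [Finset.card_union_of_disjoint hdisj] at this
      have h2 := hsplit x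
      have hcui := Finset.card_union_add_card_inter e f
      have hek := hsk e heE
      have hfk := hsk f hfE
      omega
    push_neg at hf
    -- FINAL CASE: every vertex has degree 2, intersecting pairs have large union
    -- maximal strongly independent set M
    set U := E.biUnion id with hUdef
    set P := U.powerset.filter (fun M => ∀ e ∈ E, (e ∩ M).card ≤ 1) with hPdef
    have hPne : P.Nonempty := ⟨∅, Finset.mem_filter.2 ⟨Finset.mem_powerset.2 (Finset.empty_subset _),
      fun e _ => by simp⟩⟩
    obtain ⟨M, hMP, hMmax⟩ := P.exists_max_image Finset.card hPne
    have hMsub : M ⊆ U := Finset.mem_powerset.1 (Finset.mem_filter.1 hMP).1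
    have hM1 : ∀ e ∈ E, (e ∩ M).card ≤ 1 := (Finset.mem_filter.1 hMP).2
    have hM1' : ∀ e ∈ E, ∀ w ∈ e ∩ M, ∀ w' ∈ e ∩ M, w = w' := by
      intro e he w hw w' hw'
      exact Finset.card_le_one.1 (hM1 e he) w hw w' hw'
    have ht1 : 1 ≤ M.card := by
      obtain ⟨e₀, he₀⟩ := hE
      obtain ⟨y, hy⟩ := Finset.card_pos.1 (h1 e₀ he₀)
      have hyP : ({y} : Finset V) ∈ P := by
        refine Finset.mem_filter.2 ⟨Finset.mem_powerset.2 ?_, fun e _ => ?_⟩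
        · exact Finset.singleton_subset_iff.2 (Finset.mem_biUnion.2 ⟨e₀, he₀, hy⟩)
        · exact le_trans (Finset.card_le_card (Finset.inter_subset_right)) (by simp)
      have := hMmax _ hyP
      simpa using this
    set C := E.filter (fun e => (e ∩ M).Nonempty) with hCdef
    set I := E.filter (fun e => ¬ (e ∩ M).Nonempty) with hIdef
    have hIM : ∀ g ∈ I, g ∩ M = ∅ := fun g hg =>
      Finset.not_nonempty_iff_eq_empty.1 (Finset.mem_filter.1 hg).2
    have hIE : ∀ g ∈ I, g ∈ E := fun g hg => (Finset.mem_filter.1 hg).1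
    have hCE : ∀ g ∈ C, g ∈ E := fun g hg => (Finset.mem_filter.1 hg).1
    -- |C| = 2 |M|
    have hCcard : C.card = 2 * M.card := by
      have hdc := double_count E M
      have hdegM : ∑ v ∈ M, (E.filter (fun e => v ∈ e)).card = 2 * M.card := by
        rw [Finset.sum_congr rfl (fun v hv => hdeg2 v (hMsub hv))]
        simp [mul_comm]
      have hsplit2 : ∑ e ∈ C, (e ∩ M).card + ∑ e ∈ I, (e ∩ M).card
          = ∑ e ∈ E, (e ∩ M).card := Finset.sum_filter_add_sum_filter_not E _ _
      have hIzero : ∑ e ∈ I, (e ∩ M).card = 0 := by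
        apply Finset.sum_eq_zero
        intro g hg; rw [hIM g hg]; simp
      have hCone : ∑ e ∈ C, (e ∩ M).card = C.card := by
        have hone : ∀ e ∈ C, (e ∩ M).card = 1 := by
          intro e he
          have h1' : 1 ≤ (e ∩ M).card := Finset.card_pos.2 (Finset.mem_filter.1 he).2
          have h2' := hM1 e (hCE e he)
          omega
        rw [Finset.sum_congr rfl hone, Finset.sum_const, smul_eq_mul, mul_one]
      omega
    -- edges of I are pairwise disjoint
    have hIdisj : ∀ g ∈ I, ∀ g' ∈ I, g ≠ g' → g ∩ g' = ∅ := by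
      intro g hg g' hg' hgg'
      by_contra hne
      obtain ⟨y, hy⟩ := Finset.nonempty_iff_ne_empty.2 hne
      rw [Finset.mem_inter] at hy
      have hyM : y ∉ M := by
        intro hyM
        have : y ∈ g ∩ M := Finset.mem_inter.2 ⟨hy.1, hyM⟩
        rw [hIM g hg] at this; exact absurd this (Finset.notMem_empty y)
      have hyU : y ∈ U := Finset.mem_biUnion.2 ⟨g, hIE g hg, hy.1⟩
      -- edges through y are exactly g, g'
      have hy_edges : ∀ h ∈ E, y ∈ h → h = g ∨ h = g' := by
        intro h hh hyh
        by_contra hcon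
        push_neg at hcon
        have hsub : ({g, g', h} : Finset (Finset V)) ⊆ E.filter (fun e => y ∈ e) := by
          intro e he'
          simp only [Finset.mem_insert, Finset.mem_singleton] at he'
          rcases he' with heq | heq | heq
          · rw [heq]; exact Finset.mem_filter.2 ⟨hIE g hg, hy.1⟩
          · rw [heq]; exact Finset.mem_filter.2 ⟨hIE g' hg', hy.2⟩
          · rw [heq]; exact Finset.mem_filter.2 ⟨hh, hyh⟩
        have hc3 : ({g, g', h} : Finset (Finset V)).card = 3 := by
          rw [Finset.card_insert_of_notMem (by simp [hgg', hcon.1.symm]),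
            Finset.card_insert_of_notMem (by simp [hcon.2.symm]), Finset.card_singleton]
        have := Finset.card_le_card hsub
        rw [hc3, hdeg2 y hyU] at this; omega
      have hM'P : insert y M ∈ P := by
        refine Finset.mem_filter.2 ⟨Finset.mem_powerset.2 (Finset.insert_subset hyU hMsub), ?_⟩
        intro e he
        by_cases hye : y ∈ e
        · have heM : e ∩ M = ∅ := by
            rcases hy_edges e he hye with rfl | rfl
            exacts [hIM _ hg, hIM _ hg']
          have hall : ∀ u ∈ e ∩ insert y M, u = y := by
            intro u hu
            rw [Finset.mem_inter, Finset.mem_insert] at hu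
            rcases hu.2 with rfl | huM
            · rfl
            · exfalso
              have : u ∈ e ∩ M := Finset.mem_inter.2 ⟨hu.1, huM⟩
              rw [heM] at this; exact absurd this (Finset.notMem_empty u)
          rw [Finset.card_le_one]
          intro w hw w' hw'
          rw [hall w hw, hall w' hw']
        · have hsub : e ∩ insert y M ⊆ e ∩ M := by
            intro u hu
            rw [Finset.mem_inter, Finset.mem_insert] at hu
            rcases hu.2 with rfl | huM
            · exact absurd hu.1 hye
            · exact Finset.mem_inter.2 ⟨hu.1, huM⟩
          exact le_trans (Finset.card_le_card hsub) (hM1 e he)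
      have hlt := hMmax _ hM'P
      rw [Finset.card_insert_of_notMem hyM] at hlt
      omega
    have htwo : ∀ y ∈ U, ∀ h₁ ∈ E, ∀ h₂ ∈ E, h₁ ≠ h₂ → y ∈ h₁ → y ∈ h₂ →
        ∀ h ∈ E, y ∈ h → h = h₁ ∨ h = h₂ := by
      intro y hyU h₁ hh₁ h₂ hh₂ h12 hy1 hy2 h hh hyh
      by_contra hcon
      push_neg at hcon
      have hsub : ({h₁, h₂, h} : Finset (Finset V)) ⊆ E.filter (fun e => y ∈ e) := by
        intro e' he'
        simp only [Finset.mem_insert, Finset.mem_singleton] at he'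
        rcases he' with heq | heq | heq <;> rw [heq]
        exacts [Finset.mem_filter.2 ⟨hh₁, hy1⟩, Finset.mem_filter.2 ⟨hh₂, hy2⟩,
          Finset.mem_filter.2 ⟨hh, hyh⟩]
      have hc3 : ({h₁, h₂, h} : Finset (Finset V)).card = 3 := by
        rw [Finset.card_insert_of_notMem (by simp [h12, hcon.1.symm]),
          Finset.card_insert_of_notMem (by simp [hcon.2.symm]), Finset.card_singleton]
      have := Finset.card_le_card hsub
      rw [hc3, hdeg2 y hyU] at this; omega
    set Y := I.biUnion id with hYdef
    have hYcard : Y.card = ∑ g ∈ I, g.card := by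
      rw [hYdef]
      apply Finset.card_biUnion
      intro g hg g' hg' hgg'
      rw [Function.onFun, Finset.disjoint_left]
      intro v hv hv'
      have : v ∈ g ∩ g' := Finset.mem_inter.2 ⟨hv, hv'⟩
      rw [hIdisj g hg g' hg' hgg'] at this
      exact absurd this (Finset.notMem_empty v)
    have hYM : ∀ y ∈ Y, y ∉ M := by
      intro y hy hyM
      obtain ⟨g, hg, hyg⟩ := Finset.mem_biUnion.1 hy
      have : y ∈ g ∩ M := Finset.mem_inter.2 ⟨hyg, hyM⟩
      rw [hIM g hg] at this
      exact absurd this (Finset.notMem_empty y)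
    -- every vertex of Y lies in exactly one C-edge; rough bound suffices
    have hYsub : Y ⊆ C.biUnion (fun e => e ∩ Y) := by
      intro y hy
      obtain ⟨g, hg, hyg⟩ := Finset.mem_biUnion.1 hy
      have hyU : y ∈ U := Finset.mem_biUnion.2 ⟨g, hIE g hg, hyg⟩
      obtain ⟨e₁, e₂, he12, hfeq⟩ := Finset.card_eq_two.1 (hdeg2 y hyU)
      have hg_mem : g ∈ ({e₁, e₂} : Finset (Finset V)) := by
        rw [← hfeq]; exact Finset.mem_filter.2 ⟨hIE g hg, hyg⟩
      -- the other edge through y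
      have hother : ∃ h, h ∈ E ∧ y ∈ h ∧ h ≠ g := by
        rcases Finset.mem_insert.1 hg_mem with heq | heq
        · refine ⟨e₂, ?_, ?_, ?_⟩
          · have : e₂ ∈ E.filter (fun e => y ∈ e) := by rw [hfeq]; simp
            exact (Finset.mem_filter.1 this).1
          · have : e₂ ∈ E.filter (fun e => y ∈ e) := by rw [hfeq]; simp
            exact (Finset.mem_filter.1 this).2
          · rw [heq]; exact fun h => he12 h.symm
        · rw [Finset.mem_singleton] at heq
          refine ⟨e₁, ?_, ?_, ?_⟩
          · have : e₁ ∈ E.filter (fun e => y ∈ e) := by rw [hfeq]; simp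
            exact (Finset.mem_filter.1 this).1
          · have : e₁ ∈ E.filter (fun e => y ∈ e) := by rw [hfeq]; simp
            exact (Finset.mem_filter.1 this).2
          · rw [heq]; exact he12
      obtain ⟨h, hhE, hyh, hhg⟩ := hother
      have hhC : h ∈ C := by
        by_contra hhC
        have hhI : h ∈ I := Finset.mem_filter.2 ⟨hhE, fun hne => hhC (Finset.mem_filter.2 ⟨hhE, hne⟩)⟩
        have := hIdisj h hhI g hg hhg
        have hmem : y ∈ h ∩ g := Finset.mem_inter.2 ⟨hyh, hyg⟩
        rw [this] at hmem
        exact absurd hmem (Finset.notMem_empty y)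
      exact Finset.mem_biUnion.2 ⟨h, hhC, Finset.mem_inter.2 ⟨hyh, hy⟩⟩
    have hYle : Y.card ≤ ∑ e ∈ C, (e ∩ Y).card :=
      le_trans (Finset.card_le_card hYsub) Finset.card_biUnion_le
    -- rewrite C as a union over M
    have hCbi : C = M.biUnion (fun x => E.filter (fun e => x ∈ e)) := by
      ext e
      constructor
      · intro he
        have he' := Finset.mem_filter.1 he
        obtain ⟨x, hx⟩ := he'.2
        rw [Finset.mem_inter] at hx
        exact Finset.mem_biUnion.2 ⟨x, hx.2, Finset.mem_filter.2 ⟨he'.1, hx.1⟩⟩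
      · intro he
        obtain ⟨x, hxM, hx⟩ := Finset.mem_biUnion.1 he
        have hx' := Finset.mem_filter.1 hx
        exact Finset.mem_filter.2 ⟨hx'.1, ⟨x, Finset.mem_inter.2 ⟨hx'.2, hxM⟩⟩⟩
    have hMdisj : (M : Set V).PairwiseDisjoint (fun x => E.filter (fun e => x ∈ e)) := by
      intro x hx x' hx' hxx'
      rw [Function.onFun, Finset.disjoint_left]
      intro e he he'
      have h2' : ({x, x'} : Finset V) ⊆ e ∩ M := by
        intro w hw
        rcases Finset.mem_insert.1 hw with heq | heq
        · rw [heq]; exact Finset.mem_inter.2 ⟨(Finset.mem_filter.1 he).2, hx⟩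
        · rw [Finset.mem_singleton] at heq
          rw [heq]; exact Finset.mem_inter.2 ⟨(Finset.mem_filter.1 he').2, hx'⟩
      have hc2 : ({x, x'} : Finset V).card = 2 := Finset.card_pair hxx'
      have := Finset.card_le_card h2'
      rw [hc2] at this
      have := hM1 e (Finset.mem_filter.1 he).1
      omega
    have hsumC : ∑ e ∈ C, (e ∩ Y).card =
        ∑ x ∈ M, ∑ e ∈ E.filter (fun e => x ∈ e), (e ∩ Y).card := by
      rw [hCbi, Finset.sum_biUnion hMdisj]
    -- the per-vertex bound
    have perx : ∀ x ∈ M, ∑ e ∈ E.filter (fun e => x ∈ e), (e ∩ Y).card ≤ 2 * (k/2) := by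
      intro x hxM
      have hxU : x ∈ U := hMsub hxM
      obtain ⟨e, f, hef, hDeq⟩ := Finset.card_eq_two.1 (hdeg2 x hxU)
      have heE : e ∈ E ∧ x ∈ e := by
        have : e ∈ E.filter (fun e => x ∈ e) := by rw [hDeq]; simp
        exact Finset.mem_filter.1 this
      have hfE : f ∈ E ∧ x ∈ f := by
        have : f ∈ E.filter (fun e => x ∈ e) := by rw [hDeq]; simp
        exact Finset.mem_filter.1 this
      rw [hDeq, Finset.sum_pair hef]
      have hxY : x ∉ Y := fun hxY => hYM x hxY hxM
      have hbound1 : ∀ h ∈ E, x ∈ h → (h ∩ Y).card ≤ k - 1 := by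
        intro h hh hxh
        have hsub : h ∩ Y ⊆ h.erase x := by
          intro w hw
          rw [Finset.mem_inter] at hw
          refine Finset.mem_erase.2 ⟨?_, hw.1⟩
          rintro rfl; exact hxY hw.2
        have hcs := Finset.card_le_card hsub
        rw [Finset.card_erase_of_mem hxh] at hcs
        have := hsk h hh
        omega
      have hmeet : ∀ g₀ ∈ I, e ≠ g₀ ∧ f ≠ g₀ := by
        intro g₀ hg₀
        constructor <;> intro heq
        · have : x ∈ g₀ ∩ M := by rw [← heq]; exact Finset.mem_inter.2 ⟨heE.2, hxM⟩
          rw [hIM g₀ hg₀] at this; exact absurd this (Finset.notMem_empty x)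
        · have : x ∈ g₀ ∩ M := by rw [← heq]; exact Finset.mem_inter.2 ⟨hfE.2, hxM⟩
          rw [hIM g₀ hg₀] at this; exact absurd this (Finset.notMem_empty x)
      by_cases hA : (e ∩ Y).Nonempty
      · by_cases hB : (f ∩ Y).Nonempty
        · -- both sides meet I-edges: they must all be the same I-edge
          have hclaim : ∀ y ∈ e ∩ Y, ∀ z ∈ f ∩ Y, ∀ g ∈ I, y ∈ g → ∀ g' ∈ I, z ∈ g' →
              g = g' := by
            intro y hy z hz g hgI hyg g' hg'I hzg'
            by_contra hgg'
            rw [Finset.mem_inter] at hy hz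
            have hyU : y ∈ U := Finset.mem_biUnion.2 ⟨e, heE.1, hy.1⟩
            have hzU : z ∈ U := Finset.mem_biUnion.2 ⟨f, hfE.1, hz.1⟩
            have hy_edges := htwo y hyU e heE.1 g (hIE g hgI) (hmeet g hgI).1 hy.1 hyg
            have hz_edges := htwo z hzU f hfE.1 g' (hIE g' hg'I) (hmeet g' hg'I).2 hz.1 hzg'
            have hyz : y ≠ z := by
              rintro rfl
              rcases hy_edges f hfE.1 hz.1 with heq | heq
              · exact hef heq.symm
              · exact (hmeet g hgI).2 heq
            have hyM' : y ∉ M := hYM y hy.2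
            have hzM' : z ∉ M := hYM z hz.2
            have hz1 : z ∉ M.erase x := fun h => hzM' (Finset.mem_of_mem_erase h)
            have hy1 : y ∉ insert z (M.erase x) := by
              intro h
              rcases Finset.mem_insert.1 h with heq | h
              · exact hyz heq
              · exact hyM' (Finset.mem_of_mem_erase h)
            have hM'card : (insert y (insert z (M.erase x))).card = M.card + 1 := by
              rw [Finset.card_insert_of_notMem hy1, Finset.card_insert_of_notMem hz1,
                Finset.card_erase_of_mem hxM]
              omega
            have haux1 : ∀ h ∈ E, y ∈ h → z ∈ h → False := by
              intro h hh hyh hzh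
              rcases hy_edges h hh hyh with heq | heq <;>
                rcases hz_edges h hh hzh with heq' | heq'
              · exact hef (heq.symm.trans heq')
              · exact (hmeet g' hg'I).1 (heq.symm.trans heq')
              · exact (hmeet g hgI).2 (heq'.symm.trans heq)
              · exact hgg' (heq.symm.trans heq')
            have haux2 : ∀ h ∈ E, y ∈ h → ∀ u ∈ M, u ≠ x → u ∉ h := by
              intro h hh hyh u huM hux huh
              rcases hy_edges h hh hyh with heq | heq
              · have h1' : u ∈ e ∩ M := Finset.mem_inter.2 ⟨heq ▸ huh, huM⟩
                have h2' : x ∈ e ∩ M := Finset.mem_inter.2 ⟨heE.2, hxM⟩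
                exact hux (hM1' e heE.1 u h1' x h2')
              · have h1' : u ∈ g ∩ M := Finset.mem_inter.2 ⟨heq ▸ huh, huM⟩
                rw [hIM g hgI] at h1'; exact absurd h1' (Finset.notMem_empty u)
            have haux3 : ∀ h ∈ E, z ∈ h → ∀ u ∈ M, u ≠ x → u ∉ h := by
              intro h hh hzh u huM hux huh
              rcases hz_edges h hh hzh with heq | heq
              · have h1' : u ∈ f ∩ M := Finset.mem_inter.2 ⟨heq ▸ huh, huM⟩
                have h2' : x ∈ f ∩ M := Finset.mem_inter.2 ⟨hfE.2, hxM⟩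
                exact hux (hM1' f hfE.1 u h1' x h2')
              · have h1' : u ∈ g' ∩ M := Finset.mem_inter.2 ⟨heq ▸ huh, huM⟩
                rw [hIM g' hg'I] at h1'; exact absurd h1' (Finset.notMem_empty u)
            have hM'P : insert y (insert z (M.erase x)) ∈ P := by
              refine Finset.mem_filter.2 ⟨Finset.mem_powerset.2 ?_, ?_⟩
              · exact Finset.insert_subset hyU (Finset.insert_subset hzU
                  (fun w hw => hMsub (Finset.mem_of_mem_erase hw)))
              · intro h hh
                rw [Finset.card_le_one]
                intro w hw w' hw'
                have hchar : ∀ u ∈ h ∩ insert y (insert z (M.erase x)),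
                    u = y ∨ u = z ∨ (u ∈ M ∧ u ≠ x) := by
                  intro u hu
                  rw [Finset.mem_inter] at hu
                  rcases Finset.mem_insert.1 hu.2 with heq | hu2
                  · exact Or.inl heq
                  rcases Finset.mem_insert.1 hu2 with heq | hu3
                  · exact Or.inr (Or.inl heq)
                  · exact Or.inr (Or.inr ⟨Finset.mem_of_mem_erase hu3,
                      (Finset.mem_erase.1 hu3).1⟩)
                have hwh : w ∈ h := (Finset.mem_inter.1 hw).1
                have hw'h : w' ∈ h := (Finset.mem_inter.1 hw').1
                rcases hchar w hw with heqw | heqw | hwM <;>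
                  rcases hchar w' hw' with heqw' | heqw' | hw'M
                · rw [heqw, heqw']
                · exact (haux1 h hh (heqw ▸ hwh) (heqw' ▸ hw'h)).elim
                · exact ((haux2 h hh (heqw ▸ hwh) w' hw'M.1 hw'M.2) hw'h).elim
                · exact (haux1 h hh (heqw' ▸ hw'h) (heqw ▸ hwh)).elim
                · rw [heqw, heqw']
                · exact ((haux3 h hh (heqw ▸ hwh) w' hw'M.1 hw'M.2) hw'h).elim
                · exact ((haux2 h hh (heqw' ▸ hw'h) w hwM.1 hwM.2) hwh).elim
                · exact ((haux3 h hh (heqw' ▸ hw'h) w hwM.1 hwM.2) hwh).elim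
                · exact hM1' h hh w (Finset.mem_inter.2 ⟨hwh, hwM.1⟩)
                    w' (Finset.mem_inter.2 ⟨hw'h, hw'M.1⟩)
            have hle := hMmax _ hM'P
            rw [hM'card] at hle
            omega
          obtain ⟨y₀, hy₀⟩ := hA
          obtain ⟨z₀, hz₀⟩ := hB
          obtain ⟨g₀, hg₀I, hy₀g⟩ := Finset.mem_biUnion.1 (Finset.mem_inter.1 hy₀).2
          have hAg : e ∩ Y ⊆ g₀ := by
            intro y hy'
            obtain ⟨g, hgI, hyg⟩ := Finset.mem_biUnion.1 (Finset.mem_inter.1 hy').2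
            obtain ⟨g₁, hg₁I, hz₀g⟩ := Finset.mem_biUnion.1 (Finset.mem_inter.1 hz₀).2
            have h1' := hclaim y hy' z₀ hz₀ g hgI hyg g₁ hg₁I hz₀g
            have h2' := hclaim y₀ hy₀ z₀ hz₀ g₀ hg₀I hy₀g g₁ hg₁I hz₀g
            rw [h1', ← h2'] at hyg
            exact hyg
          have hBg : f ∩ Y ⊆ g₀ := by
            intro z hz'
            obtain ⟨g, hgI, hzg⟩ := Finset.mem_biUnion.1 (Finset.mem_inter.1 hz').2
            have h1' := hclaim y₀ hy₀ z hz' g₀ hg₀I hy₀g g hgI hzg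
            rw [← h1'] at hzg
            exact hzg
          have hbound : ∀ h ∈ E, x ∈ h → (h ∩ Y).Nonempty → h ∩ Y ⊆ g₀ →
              (h ∩ Y).card ≤ k - k/2 - 1 := by
            intro h hh hxh hne hsubg
            have hhg₀ : h ≠ g₀ := by
              rintro rfl
              have : x ∈ h ∩ M := Finset.mem_inter.2 ⟨hxh, hxM⟩
              rw [hIM h hg₀I] at this; exact absurd this (Finset.notMem_empty x)
            have hsub2 : h ∩ Y ⊆ h ∩ g₀ := fun w hw =>
              Finset.mem_inter.2 ⟨(Finset.mem_inter.1 hw).1, hsubg hw⟩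
            obtain ⟨w, hw⟩ := hne
            have hcapne : (h ∩ g₀).Nonempty := ⟨w, hsub2 hw⟩
            have hu := hf h hh g₀ (hIE g₀ hg₀I) hhg₀ hcapne
            have hci := Finset.card_union_add_card_inter h g₀
            have hk1 := hsk h hh
            have hk2 := hsk g₀ (hIE g₀ hg₀I)
            have hcc := Finset.card_le_card hsub2
            omega
          have hb1 := hbound e heE.1 heE.2 ⟨y₀, hy₀⟩ hAg
          have hb2 := hbound f hfE.1 hfE.2 ⟨z₀, hz₀⟩ hBg
          omega
        · have hB0 : (f ∩ Y).card = 0 := by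
            rw [Finset.not_nonempty_iff_eq_empty.1 hB]; simp
          have := hbound1 e heE.1 heE.2
          omega
      · have hA0 : (e ∩ Y).card = 0 := by
          rw [Finset.not_nonempty_iff_eq_empty.1 hA]; simp
        have := hbound1 f hfE.1 hfE.2
        omega
    -- global counting
    have hYbound : Y.card ≤ M.card * (2 * (k/2)) := by
      calc Y.card ≤ ∑ e ∈ C, (e ∩ Y).card := hYle
        _ = ∑ x ∈ M, ∑ e ∈ E.filter (fun e => x ∈ e), (e ∩ Y).card := hsumC
        _ ≤ M.card • (2 * (k/2)) := Finset.sum_le_card_nsmul _ _ _ perx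
        _ = M.card * (2 * (k/2)) := by rw [smul_eq_mul]
    have hsumCk : ∑ e ∈ C, e.card ≤ (2 * M.card) * k := by
      calc ∑ e ∈ C, e.card ≤ C.card • k :=
            Finset.sum_le_card_nsmul _ _ _ (fun e he => hsk e (hCE e he))
        _ = (2 * M.card) * k := by rw [smul_eq_mul, hCcard]
    have hsumE : ∑ e ∈ C, e.card + ∑ e ∈ I, e.card = ∑ e ∈ E, e.card :=
      Finset.sum_filter_add_sum_filter_not E _ _
    have hsumU : ∑ e ∈ E, e.card = 2 * U.card := by
      have h1' : ∀ e ∈ E, e.card = (e ∩ U).card := by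
        intro e he
        have hsubU : e ⊆ U := fun v hv => Finset.mem_biUnion.2 ⟨e, he, hv⟩
        rw [Finset.inter_eq_left.2 hsubU]
      have hcong : ∑ e ∈ E, e.card = ∑ e ∈ E, (e ∩ U).card := Finset.sum_congr rfl h1'
      have hdc := double_count E U
      have hsum2 : ∑ v ∈ U, (E.filter (fun e => v ∈ e)).card = ∑ v ∈ U, 2 :=
        Finset.sum_congr rfl (fun v hv => hdeg2 v hv)
      rw [hcong, hdc, hsum2, Finset.sum_const, smul_eq_mul, mul_comm]
    have hKEY : U.card ≤ (k + k/2) * M.card := by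
      have h2' : 2 * U.card ≤ 2 * ((k + k/2) * M.card) := by
        calc 2 * U.card = ∑ e ∈ E, e.card := hsumU.symm
          _ = ∑ e ∈ C, e.card + ∑ e ∈ I, e.card := hsumE.symm
          _ ≤ (2 * M.card) * k + M.card * (2 * (k/2)) :=
              Nat.add_le_add hsumCk (hYcard ▸ hYbound)
          _ = 2 * ((k + k/2) * M.card) := by ring
      exact Nat.le_of_mul_le_mul_left h2' (by norm_num)
    -- construct the transversal
    obtain ⟨e₀, he₀⟩ := hE
    obtain ⟨v₀, hv₀⟩ := Finset.card_pos.1 (h1 e₀ he₀)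
    set rep : Finset V → V := fun g => if h : g.Nonempty then h.choose else v₀ with hrep
    refine ⟨M ∪ I.image rep, ?_, ?_⟩
    · intro e he
      by_cases heC : (e ∩ M).Nonempty
      · obtain ⟨w, hw⟩ := heC
        exact ⟨w, Finset.mem_inter.2 ⟨(Finset.mem_inter.1 hw).1,
          Finset.mem_union_left _ (Finset.mem_inter.1 hw).2⟩⟩
      · have heI : e ∈ I := Finset.mem_filter.2 ⟨he, heC⟩
        have hene : e.Nonempty := Finset.card_pos.1 (h1 e he)
        have hrepe : rep e ∈ e := by
          rw [hrep]; simp only; rw [dif_pos hene]; exact hene.choose_spec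
        exact ⟨rep e, Finset.mem_inter.2 ⟨hrepe,
          Finset.mem_union_right _ (Finset.mem_image.2 ⟨e, heI, rfl⟩)⟩⟩
    · have hTcard : (M ∪ I.image rep).card ≤ M.card + I.card :=
        le_trans (Finset.card_union_le _ _) (Nat.add_le_add_left (Finset.card_image_le) _)
      have hwsum : ∑ e ∈ E, (k + k/2 - e.card) + ∑ e ∈ E, e.card = (k + k/2) * E.card := by
        rw [← Finset.sum_add_distrib,
          Finset.sum_congr rfl
            (fun e he => Nat.sub_add_cancel (le_trans (hsk e he) (Nat.le_add_right _ _))),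
          Finset.sum_const, smul_eq_mul, mul_comm]
      have hEcard : C.card + I.card = E.card :=
        Finset.card_filter_add_card_filter_not _
      have main : (k + k/2) * (M.card + I.card) ≤
          ∑ e ∈ E, (k + k/2 - e.card) + U.card := by
        have hS : ∑ e ∈ E, (k + k/2 - e.card) + 2 * U.card =
            (k + k/2) * (2 * M.card + I.card) := by
          rw [← hsumU, hwsum, ← hEcard, hCcard]
        have hstep : (k + k/2) * (M.card + I.card) + 2 * U.card ≤
            (∑ e ∈ E, (k + k/2 - e.card) + U.card) + 2 * U.card := by
          calc (k + k/2) * (M.card + I.card) + 2 * U.card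
              ≤ (k + k/2) * (M.card + I.card) + ((k + k/2) * M.card + U.card) := by
                have h3 : 2 * U.card = U.card + U.card := by ring
                rw [h3]
                exact Nat.add_le_add_left (Nat.add_le_add_right hKEY _) _
            _ = (k + k/2) * (2 * M.card + I.card) + U.card := by ring
            _ = (∑ e ∈ E, (k + k/2 - e.card) + 2 * U.card) + U.card := by rw [hS]
            _ = (∑ e ∈ E, (k + k/2 - e.card) + U.card) + 2 * U.card := by ring
        exact Nat.le_of_add_le_add_right hstep
      calc (k + k/2) * (M ∪ I.image rep).card ≤ (k + k/2) * (M.card + I.card) :=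
            Nat.mul_le_mul_left _ hTcard
        _ ≤ _ := main

end CMaux

/-- Chvátal–McDiarmid: a `k`-uniform hypergraph with `n` vertices and `m` edges has a
transversal of size at most `(⌊k/2⌋·m + n)/⌊3k/2⌋`. -/
theorem stmt_3 {V : Type*} [Fintype V] [DecidableEq V] (k m n : ℕ) (hk : 1 ≤ k)
    (E : Finset (Finset V)) (huniform : ∀ e ∈ E, e.card = k) (hm : E.card = m)
    (hn : Fintype.card V = n) :
    ∃ T : Finset V, (∀ e ∈ E, (e ∩ T).Nonempty) ∧
      (T.card : ℝ) ≤ ((k / 2 : ℕ) * m + n : ℝ) / ((3 * k / 2 : ℕ) : ℝ) := by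
  classical
  obtain ⟨T, hT, hle⟩ := CMaux.key k hk (∑ e ∈ E, e.card) E le_rfl
    (fun e he => by rw [huniform e he]; exact hk)
    (fun e he => le_of_eq (huniform e he))
  refine ⟨T, hT, ?_⟩
  have h32 : (3 * k / 2 : ℕ) = k + k / 2 := by omega
  have hsum : ∑ e ∈ E, (k + k/2 - e.card) = (k/2) * m := by
    have hterm : ∀ e ∈ E, (k + k/2 - e.card) = k/2 := by
      intro e he; rw [huniform e he]; omega
    rw [Finset.sum_congr rfl hterm, Finset.sum_const, smul_eq_mul, hm, mul_comm]
  have hUn : (E.biUnion id).card ≤ n := hn ▸ Finset.card_le_univ _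
  have hNat : (k + k/2) * T.card ≤ (k/2) * m + n := by
    calc (k + k/2) * T.card ≤ (k/2) * m + (E.biUnion id).card := by rw [← hsum]; exact hle
      _ ≤ (k/2) * m + n := Nat.add_le_add_left hUn _
  have hcpos : (0:ℝ) < ((3 * k / 2 : ℕ) : ℝ) := by
    have : 1 ≤ 3 * k / 2 := by omega
    exact_mod_cast Nat.lt_of_lt_of_le Nat.zero_lt_one this
  rw [le_div_iff₀ hcpos]
  have : ((T.card : ℝ)) * ((3 * k / 2 : ℕ) : ℝ) = (((3 * k / 2) * T.card : ℕ) : ℝ) := by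
    push_cast; ring
  rw [this]
  have h2 : (3 * k / 2) * T.card ≤ (k/2) * m + n := by rw [h32]; exact hNat
  exact_mod_cast h2
end

section
/- Let G be a finite simple connected graph of diameter 2 on n vertices, and let H be a subgraph of G with maximum degree at most k (k a positive integer). If a robber is restricted to move along edges of H while k cops may move along edges of G, then the cops have a winning strategy: formally, if for every vertex x of H and every list v₁,…,v_l (l ≤ k) of its H-neighbors, each vᵢ has a G-neighbor, then k cops suffice to catch a robber confined to H. -/
/-- Cops-to-move game state is winning for `k` cops moving along `G`, against a robber
restricted to the subgraph `H`: the cops can move (each along an edge of `G` or staying)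
so that either a cop lands on the robber, or every robber move (along an edge of `H` or
staying) leads to a winning state for the cops. -/
inductive RestrictedCopsWinFrom {V : Type*} (G : SimpleGraph V) (H : G.Subgraph) {k : ℕ} :
    (Fin k → V) → V → Prop
  | catch (c : Fin k → V) (r : V) (c' : Fin k → V)
      (hmove : ∀ i, c' i = c i ∨ G.Adj (c i) (c' i))
      (hcatch : ∃ i, c' i = r) :
      RestrictedCopsWinFrom G H c r
  | step (c : Fin k → V) (r : V) (c' : Fin k → V)
      (hmove : ∀ i, c' i = c i ∨ G.Adj (c i) (c' i))
      (h : ∀ r', (r' = r ∨ H.Adj r r') → RestrictedCopsWinFrom G H c' r') :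
      RestrictedCopsWinFrom G H c r

private lemma dom_aux {V : Type*} (G : SimpleGraph V)
    (hdiam : ∀ u v : V, u ≠ v → G.Adj u v ∨ ∃ w, G.Adj u w ∧ G.Adj w v)
    (c v : V) : ∃ c', (c' = c ∨ G.Adj c c') ∧ (c' = v ∨ G.Adj c' v) := by
  by_cases h : c = v
  · exact ⟨c, Or.inl rfl, Or.inl h⟩
  by_cases h2 : G.Adj c v
  · exact ⟨c, Or.inl rfl, Or.inr h2⟩
  rcases hdiam c v h with h3 | ⟨w, hw1, hw2⟩
  · exact absurd h3 h2
  · exact ⟨w, Or.inr hw1, Or.inr hw2⟩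

private lemma win_all {V : Type*} [Fintype V] (G : SimpleGraph V)
    (hdiam : ∀ u v : V, u ≠ v → G.Adj u v ∨ ∃ w, G.Adj u w ∧ G.Adj w v)
    (H : G.Subgraph) (k : ℕ) (hk : 1 ≤ k)
    (hdeg : ∀ x ∈ H.verts, (H.neighborSet x).ncard ≤ k)
    (c : Fin k → V) (r : V) : RestrictedCopsWinFrom G H c r := by
  classical
  set S := H.neighborSet r with hS
  have hSfin : S.Finite := Set.toFinite S
  have hcard : S.ncard ≤ k := by
    by_cases hr : r ∈ H.verts
    · exact hdeg r hr
    · have : S = ∅ := by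
        ext v
        simp only [hS, SimpleGraph.Subgraph.mem_neighborSet, Set.mem_empty_iff_false,
          iff_false]
        intro h
        exact hr h.fst_mem
      simp [this]
  set l := hSfin.toFinset.toList with hl
  have hlen : l.length ≤ k := by
    have h1 : l.length = hSfin.toFinset.card := Finset.length_toList _
    have h2 : S.ncard = hSfin.toFinset.card := Set.ncard_eq_toFinset_card S hSfin
    omega
  set f : Fin k → V := fun i => l.getD i r with hf
  have hcover : ∀ v ∈ S, ∃ j : Fin k, f j = v := by
    intro v hv
    have hvl : v ∈ l := by
      rw [hl, Finset.mem_toList, Set.Finite.mem_toFinset]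
      exact hv
    obtain ⟨i, hi, hiv⟩ := List.getElem_of_mem hvl
    refine ⟨⟨i, lt_of_lt_of_le hi hlen⟩, ?_⟩
    simp only [hf]
    rw [List.getD_eq_getElem l r hi]
    exact hiv
  have hnear : ∃ j : Fin k, f j = r ∨ G.Adj (f j) r := by
    by_cases hlk : l.length < k
    · refine ⟨⟨l.length, hlk⟩, Or.inl ?_⟩
      simp only [hf]
      exact List.getD_eq_default l r le_rfl
    · have hkl : l.length = k := le_antisymm hlen (not_lt.mp hlk)
      have h0 : (0 : ℕ) < l.length := by omega
      refine ⟨⟨0, hk⟩, Or.inr ?_⟩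
      have hmem : l[0] ∈ l := List.getElem_mem h0
      have hmemS : l[0] ∈ S := hSfin.mem_toFinset.mp (Finset.mem_toList.mp hmem)
      have : H.Adj r l[0] := hmemS
      have hadj : G.Adj r l[0] := this.adj_sub
      have : f ⟨0, hk⟩ = l[0] := by
        simp only [hf]
        exact List.getD_eq_getElem l r h0
      rw [this]
      exact hadj.symm
  have hc1 := fun i => dom_aux G hdiam (c i) (f i)
  choose c1 h1a h1b using hc1
  refine RestrictedCopsWinFrom.step c r c1 ?_ ?_
  · intro i
    rcases h1a i with h | h
    · exact Or.inl h
    · exact Or.inr h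
  intro r' hr'
  have hmove2 : ∀ i, f i = c1 i ∨ G.Adj (c1 i) (f i) := by
    intro i
    rcases h1b i with h | h
    · exact Or.inl h.symm
    · exact Or.inr h
  rcases hr' with hr' | hr'
  · -- robber stayed at r
    subst hr'
    obtain ⟨j, hj⟩ := hnear
    rcases hj with hj | hj
    · exact RestrictedCopsWinFrom.catch c1 r' f hmove2 ⟨j, hj⟩
    · refine RestrictedCopsWinFrom.step c1 r' f hmove2 ?_
      intro r'' hr''
      rcases hr'' with hr'' | hr''
      · -- robber stays again; cop j walks onto r''
        subst hr''
        refine RestrictedCopsWinFrom.catch f r'' (fun i => if i = j then r'' else f i) ?_ ?_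
        · intro i
          by_cases hij : i = j
          · subst hij
            simp only [if_pos rfl]
            exact Or.inr hj
          · exact Or.inl (if_neg hij)
        · exact ⟨j, by simp⟩
      · -- robber moves to a neighbor; that neighbor is occupied
        obtain ⟨j', hj'⟩ := hcover r'' hr''
        exact RestrictedCopsWinFrom.catch f r'' f (fun i => Or.inl rfl) ⟨j', hj'⟩
  · -- robber moved to a neighbor r'
    obtain ⟨j, hj⟩ := hcover r' hr'
    refine RestrictedCopsWinFrom.catch c1 r' (fun i => if i = j then f j else c1 i) ?_ ?_
    · intro i
      by_cases hij : i = j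
      · subst hij
        simp only [if_pos rfl]
        exact hmove2 i
      · exact Or.inl (if_neg hij)
    · exact ⟨j, by simp [hj]⟩

/-- If `G` is connected of diameter 2 and `H ⊆ G` has maximum degree at most `k ≥ 1`,
then `k` cops moving on `G` can catch a robber restricted to `H`. -/
theorem stmt_4 {V : Type*} [Fintype V] (G : SimpleGraph V) (hconn : G.Connected)
    (hdiam : ∀ u v : V, u ≠ v → G.Adj u v ∨ ∃ w, G.Adj u w ∧ G.Adj w v)
    (H : G.Subgraph) (k : ℕ) (hk : 1 ≤ k)
    (hdeg : ∀ x ∈ H.verts, (H.neighborSet x).ncard ≤ k)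
    (hnbr : ∀ x ∈ H.verts, ∀ v, H.Adj x v → ∃ w, G.Adj v w) :
    ∃ c₀ : Fin k → V, ∀ r₀ ∈ H.verts, RestrictedCopsWinFrom G H c₀ r₀ := by
  obtain ⟨v0⟩ := hconn.nonempty
  exact ⟨fun _ => v0, fun r₀ _ => win_all G hdiam H k hk hdeg _ r₀⟩
end

section
/- Let G be a finite simple connected graph of diameter 2 with n vertices. Then the cop number of G is at most √(2n). -/
/-- `CopsWinFrom G c r` : with cops at positions `c` and robber at `r`, cops to move,
the `k` cops (moving along edges of `G` or staying) can catch the robber (who moves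
along edges of `G` or stays). -/
inductive CopsWinFrom {V : Type*} (G : SimpleGraph V) {k : ℕ} : (Fin k → V) → V → Prop
  | catch (c : Fin k → V) (r : V) (c' : Fin k → V)
      (hmove : ∀ i, c' i = c i ∨ G.Adj (c i) (c' i))
      (hcatch : ∃ i, c' i = r) :
      CopsWinFrom G c r
  | step (c : Fin k → V) (r : V) (c' : Fin k → V)
      (hmove : ∀ i, c' i = c i ∨ G.Adj (c i) (c' i))
      (h : ∀ r', (r' = r ∨ G.Adj r r') → CopsWinFrom G c' r') :
      CopsWinFrom G c r

/-- `k` cops have a winning strategy: they can choose initial positions such that,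
wherever the robber starts, they catch him. -/
def CopsWin {V : Type*} (G : SimpleGraph V) (k : ℕ) : Prop :=
  ∃ c₀ : Fin k → V, ∀ r₀ : V, CopsWinFrom G c₀ r₀

/-- The cop number of `G`. -/
noncomputable def copNumber {V : Type*} (G : SimpleGraph V) : ℕ :=
  sInf {k | CopsWin G k}

section CopsAux

open Finset

variable {V : Type*} [Fintype V] [DecidableEq V] (G : SimpleGraph V) [DecidableRel G.Adj]

/-- The closed neighborhood of a vertex, as a finset. -/
def nbhd (v : V) : Finset V := insert v (G.neighborFinset v)

lemma mem_nbhd {v x : V} : x ∈ nbhd G v ↔ x = v ∨ G.Adj v x := by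
  simp [nbhd]

variable [Nonempty V]

/-- A vertex maximizing new closed-neighborhood coverage relative to `s`. -/
noncomputable def gBest (s : Finset V) : V :=
  (Finset.exists_max_image Finset.univ (fun v => ((nbhd G v) \ s).card)
    Finset.univ_nonempty).choose

lemma gBest_spec (s : Finset V) (w : V) :
    ((nbhd G w) \ s).card ≤ ((nbhd G (gBest G s)) \ s).card := by
  have h := (Finset.exists_max_image Finset.univ (fun v => ((nbhd G v) \ s).card)
    Finset.univ_nonempty).choose_spec
  exact h.2 w (Finset.mem_univ w)

/-- Greedy coverage sets: repeatedly add the closed neighborhood covering the most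
new vertices. -/
noncomputable def gC : ℕ → Finset V
  | 0 => ∅
  | j + 1 => gC j ∪ nbhd G (gBest G (gC j))

lemma gC_card_succ (j : ℕ) :
    (gC G (j + 1)).card = (gC G j).card + ((nbhd G (gBest G (gC G j))) \ gC G j).card := by
  rw [show gC G (j+1) = gC G j ∪ nbhd G (gBest G (gC G j)) from rfl,
    Finset.union_comm, ← Finset.card_sdiff_add_card, Nat.add_comm]

lemma mem_gC {j : ℕ} {x : V} (hx : x ∈ gC G j) :
    ∃ i, i < j ∧ x ∈ nbhd G (gBest G (gC G i)) := by
  induction j with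
  | zero => simp [gC] at hx
  | succ i ih =>
    rcases Finset.mem_union.1 hx with h | h
    · obtain ⟨i', hi', hm⟩ := ih h
      exact ⟨i', Nat.lt_succ_of_lt hi', hm⟩
    · exact ⟨i, Nat.lt_succ_self i, h⟩

/-- There is a stage `j ≤ √(2n)` at which the number of static cops used so far plus the
maximal remaining free closed neighborhood size is at most `√(2n)`. -/
lemma exists_stage :
    ∃ j ≤ Nat.sqrt (2 * Fintype.card V),
      j + ((nbhd G (gBest G (gC G j))) \ gC G j).card ≤ Nat.sqrt (2 * Fintype.card V) := by
  set n := Fintype.card V with hn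
  set k := Nat.sqrt (2 * n) with hk
  by_contra hcon
  push_neg at hcon
  have key : ∀ j, j ≤ k → j * (2 * k + 3) ≤ 2 * (gC G j).card + j * j := by
    intro j
    induction j with
    | zero => simp
    | succ i ih =>
      intro hik
      have hi : i ≤ k := Nat.le_of_succ_le hik
      have h1 := ih hi
      have h2 := hcon i hi
      have h3 := gC_card_succ G i
      nlinarith [h1, h2, h3]
  have hkk := key k le_rfl
  have hpos : 0 < ((nbhd G (gBest G (gC G k))) \ gC G k).card := by
    have := hcon k le_rfl; omega
  obtain ⟨x, hx⟩ := Finset.card_pos.1 hpos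
  have hxnot : x ∉ gC G k := (Finset.mem_sdiff.1 hx).2
  have hlt : (gC G k).card < n := by
    have hle : (gC G k).card ≤ n := (gC G k).card_le_univ
    rcases lt_or_eq_of_le hle with h | h
    · exact h
    · exact absurd ((Finset.eq_univ_of_card _ h) ▸ Finset.mem_univ x) hxnot
  have hsq : 2 * n < (k + 1) * (k + 1) := by
    have := Nat.lt_succ_sqrt (2 * n)
    simpa [hk, Nat.succ_eq_add_one] using this
  nlinarith [hkk, hlt, hsq]

end CopsAux

section Strat

open Finset

variable {V : Type*} [Fintype V] [DecidableEq V] (G : SimpleGraph V) [DecidableRel G.Adj]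
  [Nonempty V]

/-- If after `j` greedy steps every free closed neighborhood has at most `k - j`
vertices (with `j ≤ k`), then `k` cops win: `j` statics guard the covered set, and
the remaining cops deploy in one move to dominate `N[r] \ C`, catching next move. -/
lemma copsWin_of_stage
    (hdiam : ∀ u v : V, u ≠ v → G.Adj u v ∨ ∃ w, G.Adj u w ∧ G.Adj w v)
    (k j : ℕ) (hj : j ≤ k)
    (hgain : ∀ w : V, ((nbhd G w) \ gC G j).card ≤ k - j) :
    CopsWin G k := by
  classical
  set x0 : V := Classical.arbitrary V
  set C : Finset V := gC G j with hC
  set v : ℕ → V := fun i => gBest G (gC G i) with hv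
  -- from any `x`, one legal move reaches a vertex dominating `w`
  have happ : ∀ x w : V, ∃ y, (y = x ∨ G.Adj x y) ∧ (y = w ∨ G.Adj y w) := by
    intro x w
    by_cases hxw : x = w
    · exact ⟨x, Or.inl rfl, Or.inl hxw⟩
    rcases hdiam x w hxw with h | ⟨m, h1, h2⟩
    · exact ⟨w, Or.inr h, Or.inl rfl⟩
    · exact ⟨m, Or.inr h1, Or.inr h2⟩
  choose app happ1 happ2 using happ
  -- catching a robber inside `C`, provided statics are in position
  have hcatchC : ∀ (c : Fin k → V), (∀ i : Fin k, (i : ℕ) < j → c i = v (i : ℕ)) →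
      ∀ r ∈ C, CopsWinFrom G c r := by
    intro c hc r hr
    obtain ⟨i, hij, hmem⟩ := mem_gC G hr
    have hik : i < k := lt_of_lt_of_le hij hj
    refine CopsWinFrom.catch c r (Function.update c ⟨i, hik⟩ r) ?_
      ⟨⟨i, hik⟩, Function.update_self _ _ _⟩
    intro i'
    rcases eq_or_ne i' ⟨i, hik⟩ with rfl | hne
    · rw [Function.update_self, hc _ hij]
      exact (mem_nbhd G).1 hmem
    · rw [Function.update_of_ne hne]
      exact Or.inl rfl
  refine ⟨fun i => if (i : ℕ) < j then v (i : ℕ) else x0, fun r0 => ?_⟩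
  by_cases hr0 : r0 ∈ C
  · exact hcatchC _ (fun i hij => if_pos hij) r0 hr0
  -- robber outside `C` : deploy mobiles onto `N[r0] \ C`
  · set T : Finset V := (nbhd G r0) \ C with hT
    have hTcard : Fintype.card ↥T ≤ Fintype.card (Fin (k - j)) := by
      simpa [Fintype.card_coe] using hgain r0
    let ι : ↥T ↪ Fin (k - j) := (Function.Embedding.nonempty_of_card_le hTcard).some
    set c1 : Fin k → V := fun i =>
      if (i : ℕ) < j then v (i : ℕ)
      else if h2 : ∃ w : ↥T, j + ((ι w : Fin (k - j)) : ℕ) = (i : ℕ) then app x0 (↑h2.choose)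
      else x0 with hc1def
    have hc1static : ∀ i : Fin k, (i : ℕ) < j → c1 i = v (i : ℕ) := by
      intro i hij; simp only [hc1def, if_pos hij]
    refine CopsWinFrom.step _ _ c1 ?_ ?_
    · -- deployment is a legal move
      intro i
      by_cases hij : (i : ℕ) < j
      · exact Or.inl (by simp only [hc1def, if_pos hij, if_pos hij])
      · simp only [hc1def, if_neg hij]
        by_cases h2 : ∃ w : ↥T, j + ((ι w : Fin (k - j)) : ℕ) = (i : ℕ)
        · rw [dif_pos h2]
          rcases happ1 x0 (↑h2.choose) with h | h
          · exact Or.inl (by rw [h])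
          · exact Or.inr h
        · rw [dif_neg h2]; exact Or.inl rfl
    · intro r' hr'
      by_cases hr'C : r' ∈ C
      · exact hcatchC c1 hc1static r' hr'C
      · have hr'T : r' ∈ T := by
          refine Finset.mem_sdiff.2 ⟨(mem_nbhd G).2 ?_, hr'C⟩
          rcases hr' with h | h
          · exact Or.inl h
          · exact Or.inr h
        set w : ↥T := ⟨r', hr'T⟩ with hw
        have hlt : j + ((ι w : Fin (k - j)) : ℕ) < k := by
          have h1 := (ι w).isLt
          omega
        set iw : Fin k := ⟨j + ((ι w : Fin (k - j)) : ℕ), hlt⟩ with hiw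
        have hc1iw : c1 iw = app x0 r' := by
          have hnot : ¬ ((iw : ℕ) < j) := by simp [hiw]
          have hex : ∃ w' : ↥T, j + ((ι w' : Fin (k - j)) : ℕ) = (iw : ℕ) := ⟨w, rfl⟩
          have hch : hex.choose = w := by
            have hsp := hex.choose_spec
            have : ((ι hex.choose : Fin (k - j)) : ℕ) = ((ι w : Fin (k - j)) : ℕ) := by
              simp only [hiw] at hsp; omega
            exact ι.injective (Fin.ext this)
          simp only [hc1def, if_neg hnot, dif_pos hex, hch, hw]
        refine CopsWinFrom.catch c1 r' (Function.update c1 iw r') ?_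
          ⟨iw, Function.update_self _ _ _⟩
        intro i'
        rcases eq_or_ne i' iw with rfl | hne
        · rw [Function.update_self, hc1iw]
          rcases happ2 x0 r' with h | h
          · exact Or.inl h.symm
          · exact Or.inr h
        · rw [Function.update_of_ne hne]
          exact Or.inl rfl

end Strat

/-- A connected graph of diameter 2 on `n` vertices has cop number at most `√(2n)`. -/
theorem stmt_5 {V : Type*} [Fintype V] (G : SimpleGraph V) (hconn : G.Connected)
    (hdiam : ∀ u v : V, u ≠ v → G.Adj u v ∨ ∃ w, G.Adj u w ∧ G.Adj w v) :
    (copNumber G : ℝ) ≤ Real.sqrt (2 * Fintype.card V) := by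
  classical
  have hne : Nonempty V := hconn.nonempty
  obtain ⟨j, hjk, hstage⟩ := exists_stage G
  have hgain : ∀ w : V,
      ((nbhd G w) \ gC G j).card ≤ Nat.sqrt (2 * Fintype.card V) - j :=
    fun w => le_trans (gBest_spec G (gC G j) w) (by omega)
  have hwin : CopsWin G (Nat.sqrt (2 * Fintype.card V)) :=
    copsWin_of_stage G hdiam _ j hjk hgain
  have h1 : copNumber G ≤ Nat.sqrt (2 * Fintype.card V) := Nat.sInf_le hwin
  have h2 : ((Nat.sqrt (2 * Fintype.card V) : ℕ) : ℝ) ≤ Real.sqrt (2 * Fintype.card V) := by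
    have h := Real.nat_sqrt_le_real_sqrt (a := 2 * Fintype.card V)
    push_cast at h ⊢
    exact h
  exact le_trans (by exact_mod_cast h1) h2
end

section
/- Every finite simple graph G on n ≥ 1 vertices has a √n-trap: there exists a vertex v and a placement of at most ⌊√n⌋ cops on vertices of G other than v such that every neighbor of v is controlled (i.e., equals or is adjacent to some cop's vertex). -/
open Finset

/-- Pairing dichotomy: any finite set `A` avoiding `v` splits into matched pairs (each
covered by one "witness" distinct from `v`) plus an unmatched part `U` whose members
pairwise have no common closed neighbor besides `v`. -/
lemma trap_pairing {V : Type*} [Fintype V] (G : SimpleGraph V) (v : V) :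
    ∀ (m : ℕ) (A : Finset V), A.card = m → v ∉ A →
    ∃ (ν : ℕ) (S U : Finset V), U ⊆ A ∧ v ∉ S ∧ S.card ≤ ν ∧ U.card + 2*ν = A.card ∧
      (∀ a ∈ A, a ∉ U → ∃ s ∈ S, a = s ∨ G.Adj s a) ∧
      (∀ u₁ ∈ U, ∀ u₂ ∈ U, u₁ ≠ u₂ → ∀ w, w ≠ v →
        ¬((w = u₁ ∨ G.Adj u₁ w) ∧ (w = u₂ ∨ G.Adj u₂ w))) := by
  classical
  intro m
  induction m using Nat.strong_induction_on with
  | _ m IH =>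
    intro A hAcard hvA
    by_cases h : ∃ a ∈ A, ∃ b ∈ A, a ≠ b ∧ ∃ w, w ≠ v ∧
        (w = a ∨ G.Adj a w) ∧ (w = b ∨ G.Adj b w)
    · obtain ⟨a, ha, b, hb, hab, w, hwv, hwa, hwb⟩ := h
      set A' : Finset V := (A.erase a).erase b with hA'
      have hbA' : b ∈ A.erase a := Finset.mem_erase.2 ⟨fun hc => hab hc.symm, hb⟩
      have hea : (A.erase a).card = m - 1 := by
        rw [Finset.card_erase_of_mem ha, hAcard]
      have hm1 : 1 ≤ m := by
        have : 0 < A.card := Finset.card_pos.2 ⟨a, ha⟩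
        omega
      have hm2 : 2 ≤ m := by
        have h1 : 0 < (A.erase a).card := Finset.card_pos.2 ⟨b, hbA'⟩
        omega
      have hA'card : A'.card = m - 2 := by
        rw [hA', Finset.card_erase_of_mem hbA', hea]
        omega
      have hvA' : v ∉ A' := fun hc => hvA (Finset.mem_of_mem_erase (Finset.mem_of_mem_erase hc))
      obtain ⟨ν', S', U', hU'sub, hvS', hS'card, hU'count, hcov', hind'⟩ :=
        IH (m - 2) (by omega) A' hA'card hvA'
      refine ⟨ν' + 1, insert w S', U', ?_, ?_, ?_, ?_, ?_, hind'⟩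
      · exact hU'sub.trans (fun x hx => Finset.mem_of_mem_erase (Finset.mem_of_mem_erase hx))
      · intro hc
        rcases Finset.mem_insert.1 hc with hc | hc
        · exact hwv hc.symm
        · exact hvS' hc
      · have := Finset.card_insert_le w S'
        omega
      · omega
      · intro x hx hxU
        by_cases hxa : x = a
        · refine ⟨w, Finset.mem_insert_self _ _, ?_⟩
          rcases hwa with h1 | h1
          · exact Or.inl (hxa.trans h1.symm)
          · exact Or.inr (by rw [hxa]; exact h1.symm)
        · by_cases hxb : x = b
          · refine ⟨w, Finset.mem_insert_self _ _, ?_⟩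
            rcases hwb with h1 | h1
            · exact Or.inl (hxb.trans h1.symm)
            · exact Or.inr (by rw [hxb]; exact h1.symm)
          · have hxA' : x ∈ A' := by
              rw [hA']
              exact Finset.mem_erase.2 ⟨hxb, Finset.mem_erase.2 ⟨hxa, hx⟩⟩
            obtain ⟨s, hs, hcov⟩ := hcov' x hxA' hxU
            exact ⟨s, Finset.mem_insert_of_mem hs, hcov⟩
    · push_neg at h
      refine ⟨0, ∅, A, Finset.Subset.refl _, Finset.notMem_empty _, le_refl _, by omega,
        fun a ha haU => absurd ha haU, ?_⟩
      intro u₁ hu₁ u₂ hu₂ hne w hwv hw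
      obtain ⟨hw1, hw2⟩ := hw
      have hcon := h u₁ hu₁ u₂ hu₂ hne w hwv hw1
      rcases hw2 with h2 | h2
      · exact hcon.1 h2
      · exact hcon.2 h2

set_option maxHeartbeats 1000000 in
/-- Main induction: every nonempty graph has a `Nat.sqrt n`-trap. -/
lemma trap_aux : ∀ (n : ℕ) {V : Type u} [Fintype V] (G : SimpleGraph V),
    Fintype.card V = n → Nonempty V →
    ∃ v : V, ∃ S : Finset V, v ∉ S ∧ S.card ≤ Nat.sqrt n ∧
      ∀ u, G.Adj v u → ∃ s ∈ S, u = s ∨ G.Adj s u := by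
  intro n
  induction n using Nat.strong_induction_on with
  | _ n IH =>
    intro V _ G hcard hne
    classical
    haveI := hne
    obtain ⟨v, -, hvmin⟩ := Finset.exists_min_image (Finset.univ : Finset V)
      (fun x => G.degree x) Finset.univ_nonempty
    set k : ℕ := Nat.sqrt n with hk
    set d : ℕ := G.degree v with hd
    clear_value k d
    have hkn : k * k ≤ n := by
      have h := Nat.sqrt_le' n
      rw [pow_two] at h
      rw [hk]
      exact h
    have hb : (k+1) * (k+1) = k*k + 2*k + 1 := by ring
    have hnk : n < k*k + 2*k + 1 := by
      have h2 := Nat.lt_succ_sqrt' n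
      rw [pow_two, Nat.succ_eq_add_one] at h2
      have hb2 : (Nat.sqrt n + 1) * (Nat.sqrt n + 1) = Nat.sqrt n * Nat.sqrt n + 2 * Nat.sqrt n + 1 := by
        ring
      rw [hk]
      omega
    by_cases hdk : d ≤ k
    · -- trivial trap: cops on all neighbors of v
      refine ⟨v, G.neighborFinset v, ?_, ?_, ?_⟩
      · intro hc
        exact G.irrefl ((SimpleGraph.mem_neighborFinset G v v).1 hc)
      · rw [G.card_neighborFinset_eq_degree v, ← hd]; exact hdk
      · intro u hu
        exact ⟨u, (SimpleGraph.mem_neighborFinset G v u).2 hu, Or.inl rfl⟩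
    · push_neg at hdk  -- k + 1 ≤ d
      have hvA : v ∉ G.neighborFinset v := fun hc =>
        G.irrefl ((SimpleGraph.mem_neighborFinset G v v).1 hc)
      obtain ⟨ν, S₀, U, hUsub, hvS₀, hS₀card, hUcount, hcov, hind⟩ :=
        trap_pairing G v (G.neighborFinset v).card (G.neighborFinset v) rfl hvA
      rw [G.card_neighborFinset_eq_degree v, ← hd] at hUcount
      have hvU : v ∉ U := fun hc => hvA (hUsub hc)
      by_cases h2a : d ≤ k + ν
      · -- pair witnesses plus unmatched singletons give a small trap at v
        refine ⟨v, S₀ ∪ U, ?_, ?_, ?_⟩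
        · intro hc
          rcases Finset.mem_union.1 hc with hc | hc
          · exact hvS₀ hc
          · exact hvU hc
        · have h1 := Finset.card_union_le S₀ U
          omega
        · intro u hu
          have huA : u ∈ G.neighborFinset v := (SimpleGraph.mem_neighborFinset G v u).2 hu
          by_cases huU : u ∈ U
          · exact ⟨u, Finset.mem_union_right _ huU, Or.inl rfl⟩
          · obtain ⟨s, hs, hc⟩ := hcov u huA huU
            exact ⟨s, Finset.mem_union_left _ hs, hc⟩
      · push_neg at h2a  -- k + ν + 1 ≤ d
        have hmindeg : ∀ x : V, d ≤ G.degree x := fun x => hvmin x (Finset.mem_univ x)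
        have hdn : d + 1 ≤ n := by
          have := G.degree_lt_card_verts v
          omega
        by_cases hbig : 2*k + 2 ≤ d
        · -- huge minimum degree: delete the closed neighborhood of v, recurse
          set D : Finset V := insert v (G.neighborFinset v) with hD
          have hDcard : D.card = d + 1 := by
            rw [hD, Finset.card_insert_of_notMem hvA, G.card_neighborFinset_eq_degree v, ← hd]
          set T : Finset V := Dᶜ with hT
          have hTcard : T.card = n - (d+1) := by
            rw [hT, Finset.card_compl, hDcard, hcard]
          have hk1 : 1 ≤ k := by
            rcases Nat.eq_zero_or_pos k with h0 | hp
            · exfalso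
              have hkk0 : k * k = 0 := by rw [h0]
              omega
            · exact hp
          have hcovD : ∀ u ∈ D, u = v ∨ G.Adj v u := by
            intro u hu
            rw [hD] at hu
            rcases Finset.mem_insert.1 hu with h1 | h1
            · exact Or.inl h1
            · exact Or.inr ((SimpleGraph.mem_neighborFinset G v u).1 h1)
          rcases Nat.eq_zero_or_pos T.card with hT0 | hTpos
          · -- closed neighborhood of v is everything: cop on v traps any w ≠ v
            have hDuniv : ∀ x : V, x ∈ D := by
              intro x
              by_contra hc
              have hx : x ∈ T := Finset.mem_compl.2 hc
              rw [Finset.card_eq_zero.1 hT0] at hx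
              exact Finset.notMem_empty x hx
            have hn2 : 1 < Fintype.card V := by omega
            obtain ⟨w, hwv⟩ := Fintype.exists_ne_of_one_lt_card hn2 v
            refine ⟨w, {v}, ?_, ?_, ?_⟩
            · intro hc; exact hwv (Finset.mem_singleton.1 hc)
            · rw [Finset.card_singleton]; omega
            · intro u _
              exact ⟨v, Finset.mem_singleton_self v, hcovD u (hDuniv u)⟩
          · -- recurse on the complement
            have hTlt : T.card < n := by omega
            have hTk : T.card < k * k := by omega
            set G' : SimpleGraph ↥T := G.comap ((↑) : ↥T → V) with hG'
            have hcard' : Fintype.card ↥T = T.card := Fintype.card_coe T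
            have hne' : Nonempty ↥T := by
              obtain ⟨x0, hx0⟩ := Finset.card_pos.1 hTpos
              exact ⟨⟨x0, hx0⟩⟩
            obtain ⟨w', S', hw'S', hS'card, hcov'⟩ := IH T.card hTlt G' hcard' hne'
            have hsq : Nat.sqrt T.card ≤ k - 1 := by
              have h3 : Nat.sqrt T.card < k := Nat.sqrt_lt'.2 (by rw [pow_two]; exact hTk)
              omega
            have hw'D : (w' : V) ∉ D := by
              have hw'T : (w' : V) ∈ Dᶜ := w'.2
              exact Finset.mem_compl.1 hw'T
            refine ⟨(w' : V), insert v (S'.image ((↑) : ↥T → V)), ?_, ?_, ?_⟩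
            · intro hc
              rcases Finset.mem_insert.1 hc with hc | hc
              · exact hw'D (by rw [hc, hD]; exact Finset.mem_insert_self _ _)
              · obtain ⟨s', hs', hval⟩ := Finset.mem_image.1 hc
                exact hw'S' (by rwa [← Subtype.ext hval.symm] at hs')
            · have h1 := Finset.card_insert_le v (S'.image ((↑) : ↥T → V))
              have h2 := Finset.card_image_le (f := ((↑) : ↥T → V)) (s := S')
              omega
            · intro u hu
              by_cases huD : u ∈ D
              · exact ⟨v, Finset.mem_insert_self _ _, hcovD u huD⟩
              · have huT : u ∈ T := Finset.mem_compl.2 huD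
                have hadj' : G'.Adj w' ⟨u, huT⟩ := hu
                obtain ⟨s', hs', hc⟩ := hcov' ⟨u, huT⟩ hadj'
                refine ⟨(s' : V), Finset.mem_insert_of_mem (Finset.mem_image_of_mem _ hs'), ?_⟩
                rcases hc with h1 | h1
                · exact Or.inl (congrArg Subtype.val h1)
                · exact Or.inr h1
        · -- middle range : k+1 ≤ d ≤ 2k+1. Delete v and the closed neighborhoods of
          -- 2(k+1)-d unmatched vertices; (k+1-K)(k+1+K) = (k+1)²-K² closes the recursion.
          push_neg at hbig
          set K : ℕ := d - (k+1) with hK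
          have hKk : K ≤ k := by omega
          have hdK : d = k + 1 + K := by omega
          set j₀ : ℕ := k + 1 - K with hj₀
          have hνK : ν ≤ K := by omega
          have hUge : j₀ ≤ U.card := by omega
          obtain ⟨U₀, hU₀sub, hU₀card⟩ := U.exists_subset_card_eq hUge
          set f : V → Finset V := fun u => (insert u (G.neighborFinset u)).erase v with hf
          have hfmem : ∀ u x, x ∈ f u ↔ (x ≠ v ∧ (x = u ∨ G.Adj u x)) := by
            intro u x
            show x ∈ (insert u (G.neighborFinset u)).erase v ↔ _
            simp only [Finset.mem_erase, Finset.mem_insert, SimpleGraph.mem_neighborFinset]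
          have hfdisj : (↑U₀ : Set V).PairwiseDisjoint f := by
            intro u₁ hu₁ u₂ hu₂ hne'
            show Disjoint (f u₁) (f u₂)
            rw [Finset.disjoint_left]
            intro x hx1 hx2
            rw [hfmem] at hx1 hx2
            exact hind u₁ (hU₀sub hu₁) u₂ (hU₀sub hu₂) hne' x hx1.1 ⟨hx1.2, hx2.2⟩
          have hfcard : ∀ u ∈ U₀, d ≤ (f u).card := by
            intro u hu
            have huA : u ∈ G.neighborFinset v := hUsub (hU₀sub hu)
            have hunv : u ∉ G.neighborFinset u := fun hc =>
              G.irrefl ((SimpleGraph.mem_neighborFinset G u u).1 hc)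
            have hvnb : v ∈ G.neighborFinset u := by
              rw [SimpleGraph.mem_neighborFinset]
              exact ((SimpleGraph.mem_neighborFinset G v u).1 huA).symm
            have hvins : v ∈ insert u (G.neighborFinset u) := Finset.mem_insert_of_mem hvnb
            have h1 : (insert u (G.neighborFinset u)).card = G.degree u + 1 := by
              rw [Finset.card_insert_of_notMem hunv, G.card_neighborFinset_eq_degree u]
            have h2 : (f u).card = G.degree u := by
              show ((insert u (G.neighborFinset u)).erase v).card = G.degree u
              rw [Finset.card_erase_of_mem hvins, h1]
              omega
            rw [h2]
            exact hmindeg u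
          set B : Finset V := U₀.biUnion f with hB
          have hBcard : j₀ * d ≤ B.card := by
            rw [hB, Finset.card_biUnion hfdisj]
            calc j₀ * d = U₀.card • d := by rw [hU₀card, smul_eq_mul]
              _ ≤ ∑ u ∈ U₀, (f u).card := Finset.card_nsmul_le_sum U₀ _ d hfcard
          have hvB : v ∉ B := by
            rw [hB]
            intro hc
            obtain ⟨u, -, hu⟩ := Finset.mem_biUnion.1 hc
            exact ((hfmem u v).1 hu).1 rfl
          set D : Finset V := insert v B with hD
          have hDcard : j₀ * d + 1 ≤ D.card := by
            rw [hD, Finset.card_insert_of_notMem hvB]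
            omega
          have hidentity : j₀ * d + K * K = (k+1)*(k+1) := by
            rw [hj₀, hdK]
            zify [show K ≤ k + 1 by omega]
            ring
          have hDn : D.card ≤ n := by
            rw [← hcard]
            exact Finset.card_le_univ D
          have hKK : K * K ≤ (k+1)*(k+1) := Nat.mul_le_mul (by omega) (by omega)
          have hKpos : 1 ≤ K := by
            rcases Nat.eq_zero_or_pos K with h0 | hp
            · exfalso
              have hKK0 : K * K = 0 := by rw [h0]
              omega
            · exact hp
          set T : Finset V := Dᶜ with hT
          have hTcard : T.card = n - D.card := by
            rw [hT, Finset.card_compl, hcard]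
          have hTK : T.card < K * K := by omega
          have hcovD : ∀ u ∈ D, ∃ s ∈ U₀, u = s ∨ G.Adj s u := by
            intro u hu
            rw [hD] at hu
            obtain ⟨u₀, hu₀⟩ := Finset.card_pos.1 (show 0 < U₀.card by omega)
            rcases Finset.mem_insert.1 hu with h1 | h1
            · refine ⟨u₀, hu₀, Or.inr ?_⟩
              rw [h1]
              exact ((SimpleGraph.mem_neighborFinset G v u₀).1 (hUsub (hU₀sub hu₀))).symm
            · rw [hB] at h1
              obtain ⟨u₀', hu₀', hmem⟩ := Finset.mem_biUnion.1 h1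
              rw [hfmem] at hmem
              rcases hmem.2 with h2 | h2
              · exact ⟨u₀', hu₀', Or.inl h2⟩
              · exact ⟨u₀', hu₀', Or.inr h2⟩
          have hvU₀ : v ∉ U₀ := fun hc => hvU (hU₀sub hc)
          rcases Nat.eq_zero_or_pos T.card with hT0 | hTpos
          · -- D is everything: the j₀ block-centers trap v directly
            refine ⟨v, U₀, hvU₀, by omega, ?_⟩
            intro u hu
            have huD : u ∈ D := by
              by_contra hc
              have hx : u ∈ T := Finset.mem_compl.2 hc
              rw [Finset.card_eq_zero.1 hT0] at hx
              exact Finset.notMem_empty u hx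
            exact hcovD u huD
          · -- recurse on the complement of D
            have hTlt : T.card < n := by omega
            set G' : SimpleGraph ↥T := G.comap ((↑) : ↥T → V) with hG'
            have hcard' : Fintype.card ↥T = T.card := Fintype.card_coe T
            have hne' : Nonempty ↥T := by
              obtain ⟨x0, hx0⟩ := Finset.card_pos.1 hTpos
              exact ⟨⟨x0, hx0⟩⟩
            obtain ⟨w', S', hw'S', hS'card, hcov'⟩ := IH T.card hTlt G' hcard' hne'
            have hsq : Nat.sqrt T.card ≤ K - 1 := by
              have h3 : Nat.sqrt T.card < K := Nat.sqrt_lt'.2 (by rw [pow_two]; exact hTK)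
              omega
            have hw'D : (w' : V) ∉ D := by
              have hw'T : (w' : V) ∈ Dᶜ := w'.2
              exact Finset.mem_compl.1 hw'T
            have hU₀D : ∀ u ∈ U₀, u ∈ D := by
              intro u hu
              rw [hD]
              refine Finset.mem_insert_of_mem ?_
              rw [hB]
              refine Finset.mem_biUnion.2 ⟨u, hu, ?_⟩
              rw [hfmem]
              exact ⟨fun hc => hvU₀ (hc ▸ hu), Or.inl rfl⟩
            refine ⟨(w' : V), (S'.image ((↑) : ↥T → V)) ∪ U₀, ?_, ?_, ?_⟩
            · intro hc
              rcases Finset.mem_union.1 hc with hc | hc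
              · obtain ⟨s', hs', hval⟩ := Finset.mem_image.1 hc
                exact hw'S' (by rwa [← Subtype.ext hval.symm] at hs')
              · exact hw'D (hU₀D _ hc)
            · have h1 := Finset.card_union_le (S'.image ((↑) : ↥T → V)) U₀
              have h2 := Finset.card_image_le (f := ((↑) : ↥T → V)) (s := S')
              omega
            · intro u hu
              by_cases huD : u ∈ D
              · obtain ⟨s, hs, hc⟩ := hcovD u huD
                exact ⟨s, Finset.mem_union_right _ hs, hc⟩
              · have huT : u ∈ T := Finset.mem_compl.2 huD
                have hadj' : G'.Adj w' ⟨u, huT⟩ := hu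
                obtain ⟨s', hs', hc⟩ := hcov' ⟨u, huT⟩ hadj'
                refine ⟨(s' : V), Finset.mem_union_left _ (Finset.mem_image_of_mem _ hs'), ?_⟩
                rcases hc with h1 | h1
                · exact Or.inl (congrArg Subtype.val h1)
                · exact Or.inr h1

lemma floor_real_sqrt (n : ℕ) : ⌊Real.sqrt n⌋₊ = Nat.sqrt n := by
  have h0 : (0:ℝ) ≤ Real.sqrt n := Real.sqrt_nonneg _
  have hcast1 : ((Nat.sqrt n : ℕ) : ℝ) = Real.sqrt (((Nat.sqrt n)^2 : ℕ) : ℝ) := by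
    push_cast
    rw [Real.sqrt_sq (by positivity)]
  have h1 : (Nat.sqrt n : ℝ) ≤ Real.sqrt n := by
    rw [hcast1]
    apply Real.sqrt_le_sqrt
    exact_mod_cast Nat.sqrt_le' n
  have hcast2 : (((Nat.sqrt n + 1)^2 : ℕ) : ℝ) = ((Nat.sqrt n + 1 : ℕ) : ℝ)^2 := by push_cast; ring
  have h2 : Real.sqrt n < ((Nat.sqrt n + 1 : ℕ) : ℝ) := by
    have hlt : (n : ℝ) < ((Nat.sqrt n + 1 : ℕ) : ℝ)^2 := by
      rw [← hcast2]
      exact_mod_cast Nat.lt_succ_sqrt' n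
    have := Real.sqrt_lt_sqrt (by positivity : (0:ℝ) ≤ (n:ℝ)) hlt
    rwa [Real.sqrt_sq (by positivity)] at this
  rw [Nat.floor_eq_iff h0]
  constructor
  · exact h1
  · exact_mod_cast h2

/-- Every graph on `n ≥ 1` vertices has a `√n`-trap: a vertex `v` together with a set
`S` of at most `⌊√n⌋` cop positions, none equal to `v`, such that every neighbor of `v`
is controlled (equal or adjacent to a cop). -/
theorem stmt_6 {V : Type*} [Fintype V] (G : SimpleGraph V) (hn : 1 ≤ Fintype.card V) :
    ∃ v : V, ∃ S : Finset V, v ∉ S ∧ S.card ≤ ⌊Real.sqrt (Fintype.card V)⌋₊ ∧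
      ∀ u, G.Adj v u → ∃ s ∈ S, u = s ∨ G.Adj s u := by
  rw [floor_real_sqrt]
  exact trap_aux (Fintype.card V) G rfl (Fintype.card_pos_iff.1 hn)
end

section
/- For every finite simple graph G on n vertices, the teleporting cop number satisfies c_T(G) ≤ √n. -/
/-- `TCopsWinFrom G c r` : teleporting cops at `c`, robber at `r`, cops to move.
The cops may each jump to any vertex other than the robber's current vertex; the robber
then moves along an edge or stays, and loses if he ends in the closed neighborhood of a
cop; any robber move avoiding this must lead to a state that is again winning for the
cops. -/
inductive TCopsWinFrom {V : Type*} (G : SimpleGraph V) {k : ℕ} : (Fin k → V) → V → Prop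
  | step (c : Fin k → V) (r : V) (c' : Fin k → V)
      (hmove : ∀ i, c' i ≠ r)
      (h : ∀ r', (r' = r ∨ G.Adj r r') → ¬(∃ i, r' = c' i ∨ G.Adj (c' i) r') →
        TCopsWinFrom G c' r') :
      TCopsWinFrom G c r

/-- `k` teleporting cops have a winning strategy on `G`. -/
def TCopsWin {V : Type*} (G : SimpleGraph V) (k : ℕ) : Prop :=
  ∃ c₀ : Fin k → V, ∀ r₀ : V, TCopsWinFrom G c₀ r₀

/-- The teleporting cop number of `G`. -/
noncomputable def tCopNumber {V : Type*} (G : SimpleGraph V) : ℕ :=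
  sInf {k | TCopsWin G k}

open Finset

/-- Key combinatorial lemma: in any graph with no isolated vertices, any nonempty
set `W` of at most `σ² + 2σ` vertices contains a "trap" vertex `r`: some `σ` cops
placed on vertices other than `r` control all of `N[r] ∩ W`. -/
lemma trap_lemma {V : Type*} [Fintype V] (G : SimpleGraph V)
    (hmin : ∀ v : V, ∃ u, G.Adj v u) :
    ∀ σ : ℕ, ∀ W : Finset V, W.Nonempty → W.card ≤ σ^2 + 2*σ →
    ∃ r ∈ W, ∃ S : Finset V, S.card ≤ σ ∧ r ∉ S ∧
      ∀ u ∈ W, (u = r ∨ G.Adj r u) → ∃ w ∈ S, u = w ∨ G.Adj w u := by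
  classical
  intro σ
  induction σ using Nat.strong_induction_on with
  | _ σ IH =>
  intro W hWne hWcard
  -- σ ≥ 1
  rcases Nat.eq_zero_or_pos σ with hσ0 | hσpos
  · exfalso; have h1 := hWne.card_pos
    have h2 : σ^2+2*σ = 0 := by subst hσ0; rfl
    omega
  -- r : min W-degree vertex
  obtain ⟨r, hrW, hrmin⟩ := W.exists_min_image (fun v => (W.filter (fun u => G.Adj v u)).card) hWne
  set A : Finset V := W.filter (fun u => G.Adj r u) with hA
  set d : ℕ := A.card with hd
  have hAsubW : A ⊆ W := filter_subset _ _
  have hrA : r ∉ A := by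
    simp only [hA, mem_filter]
    rintro ⟨-, h⟩; exact G.irrefl h
  have hAmem : ∀ a ∈ A, a ∈ W ∧ G.Adj r a := by
    intro a haA; simpa only [hA, mem_filter] using haA
  rcases le_or_gt d σ with hdle | hdgt
  · -- degree ≤ σ : trap directly
    rcases Nat.eq_zero_or_pos d with hd0 | hdpos
    · -- isolated within W
      obtain ⟨a, ha⟩ := hmin r
      refine ⟨r, hrW, {a}, ?_, ?_, ?_⟩
      · rw [card_singleton]; exact hσpos
      · simp only [mem_singleton]; rintro rfl; exact G.irrefl ha
      · intro u huW hur
        rcases hur with rfl | hadj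
        · exact ⟨a, mem_singleton_self a, Or.inr ha.symm⟩
        · exfalso
          have : u ∈ A := by simp only [hA, mem_filter]; exact ⟨huW, hadj⟩
          have : A.Nonempty := ⟨u, this⟩
          have := this.card_pos; omega
    · refine ⟨r, hrW, A, hdle, hrA, ?_⟩
      intro u huW hur
      rcases hur with rfl | hadj
      · obtain ⟨a, haA⟩ := card_pos.mp hdpos
        exact ⟨a, haA, Or.inr (hAmem a haA).2.symm⟩
      · exact ⟨u, by simp only [hA, mem_filter]; exact ⟨huW, hadj⟩, Or.inl rfl⟩
  · rcases le_or_gt (2*σ) d with hbig | hmid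
    · -- big ball: remove N[r] ∩ W and recurse at σ - 1
      set NB : Finset V := W.filter (fun u => u = r ∨ G.Adj r u) with hNB
      have hNBsub : NB ⊆ W := filter_subset _ _
      have hNBr : r ∈ NB := mem_filter.mpr ⟨hrW, Or.inl rfl⟩
      have hNBcard : NB.card = d + 1 := by
        have : NB = insert r A := by
          ext u
          simp only [hNB, hA, mem_filter, mem_insert]
          constructor
          · rintro ⟨hu, rfl | hadj⟩
            · exact Or.inl rfl
            · exact Or.inr ⟨hu, hadj⟩
          · rintro (rfl | ⟨hu, hadj⟩)
            · exact ⟨hrW, Or.inl rfl⟩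
            · exact ⟨hu, Or.inr hadj⟩
        rw [this, card_insert_of_notMem hrA]
      set W' : Finset V := W \ NB with hW'
      have hW'card : W'.card + NB.card = W.card := card_sdiff_add_card_eq_card hNBsub
      have hW'le : W'.card ≤ (σ-1)^2 + 2*(σ-1) := by
        have h1 : (σ-1)^2 + 2*(σ-1) = σ^2 - 1 := by
          cases σ with
          | zero => omega
          | succ m => simp only [Nat.succ_sub_one, pow_two]; ring_nf; omega
        rw [h1]
        have h2 : σ^2 + 2*σ ≥ W.card := hWcard
        omega
      rcases W'.eq_empty_or_nonempty with hW'e | hW'ne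
      · -- W ⊆ NB : one cop (at r) controls everything; trap at any a ∈ A
        have hApos : 0 < A.card := by omega
        obtain ⟨a, haA⟩ := card_pos.mp hApos
        refine ⟨a, (hAmem a haA).1, {r}, by rw [card_singleton]; exact hσpos, ?_, ?_⟩
        · simp only [mem_singleton]
          rintro rfl; exact G.irrefl (hAmem a haA).2
        · intro u huW _
          have huNB : u ∈ NB := by
            have : u ∈ W \ NB ∨ u ∈ NB := by
              rcases em (u ∈ NB) with h | h
              · exact Or.inr h
              · exact Or.inl (mem_sdiff.mpr ⟨huW, h⟩)
            rcases this with h | h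
            · rw [← hW', hW'e] at h; simp at h
            · exact h
          have := (mem_filter.mp huNB).2
          exact ⟨r, mem_singleton_self r, by tauto⟩
      · obtain ⟨r', hr'W', S', hS'card, hr'S', hcov'⟩ :=
          IH (σ-1) (by omega) W' hW'ne hW'le
        have hr'NB : r' ∉ NB := (mem_sdiff.mp hr'W').2
        have hr'ne : r' ≠ r := by rintro rfl; exact hr'NB hNBr
        refine ⟨r', (mem_sdiff.mp hr'W').1, insert r S', ?_, ?_, ?_⟩
        · have := card_insert_le r S'; omega
        · simp only [mem_insert]
          rintro (rfl | h)
          · exact hr'ne rfl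
          · exact hr'S' h
        · intro u huW hur
          rcases em (u ∈ NB) with huNB | huNB
          · have := (mem_filter.mp huNB).2
            exact ⟨r, mem_insert_self r S', by tauto⟩
          · have huW' : u ∈ W' := mem_sdiff.mpr ⟨huW, huNB⟩
            obtain ⟨w, hwS', hw⟩ := hcov' u huW' hur
            exact ⟨w, mem_insert_of_mem hwS', hw⟩
    · -- middle band : σ+1 ≤ d ≤ 2σ-1
      obtain ⟨x, hx⟩ : ∃ x, d = σ + 1 + x := ⟨d - (σ+1), by omega⟩
      have hxle : x + 2 ≤ σ := by omega
      obtain ⟨a, ha⟩ : ∃ a, σ + 1 = x + a := ⟨σ + 1 - x, by omega⟩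
      have ha3 : 3 ≤ a := by omega
      -- co-coverable pairs within A (midpoint ≠ r)
      set Ped : V × V → Prop := fun e =>
        e.1 ∈ A ∧ e.2 ∈ A ∧ e.1 ≠ e.2 ∧
          ∃ w, w ≠ r ∧ (e.1 = w ∨ G.Adj w e.1) ∧ (e.2 = w ∨ G.Adj w e.2) with hPed
      set Valid : Finset (V × V) → Prop := fun F =>
        (∀ e ∈ F, Ped e) ∧
        ∀ e ∈ F, ∀ e' ∈ F, e ≠ e' →
          Disjoint ({e.1, e.2} : Finset V) ({e'.1, e'.2} : Finset V) with hValid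
      have hVempty : Valid ∅ :=
        ⟨fun e he => absurd he (notMem_empty e),
         fun e he => absurd he (notMem_empty e)⟩
      obtain ⟨F, hFValid, hFmax⟩ :
          ∃ F, Valid F ∧ ∀ F', Valid F' → F'.card ≤ F.card := by
        obtain ⟨F, hFmem, hmax⟩ :=
          (Finset.univ.filter (fun F => Valid F)).exists_max_image Finset.card
            ⟨∅, mem_filter.mpr ⟨mem_univ _, hVempty⟩⟩
        exact ⟨F, (mem_filter.mp hFmem).2,
          fun F' hF' => hmax F' (mem_filter.mpr ⟨mem_univ _, hF'⟩)⟩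
      have hpairsub : ∀ e ∈ F, ({e.1, e.2} : Finset V) ⊆ A := by
        intro e he
        have hp := hFValid.1 e he
        intro z hz
        rcases mem_insert.mp hz with rfl | hz
        · exact hp.1
        · rw [mem_singleton.mp hz]; exact hp.2.1
      rcases le_or_gt (x+1) F.card with hF | hF
      · -- enough disjoint pairs : direct trap at r
        obtain ⟨F', hF'sub, hF'card⟩ := F.exists_subset_card_eq hF
        set EP' : Finset V := F'.biUnion (fun e => ({e.1, e.2} : Finset V)) with hEP'
        have hF'Ped : ∀ e ∈ F', Ped e := fun e he => hFValid.1 e (hF'sub he)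
        have hEP'card : EP'.card = 2*(x+1) := by
          rw [hEP', card_biUnion (fun e he e' he' hee =>
            hFValid.2 e (hF'sub he) e' (hF'sub he') hee)]
          have : ∀ e ∈ F', ({e.1, e.2} : Finset V).card = 2 := by
            intro e he
            rw [card_insert_of_notMem (by simpa using (hF'Ped e he).2.2.1), card_singleton]
          rw [Finset.sum_congr rfl this, Finset.sum_const, hF'card, smul_eq_mul]
          omega
        have hEP'A : EP' ⊆ A := by
          intro z hz
          obtain ⟨e, he, hze⟩ := mem_biUnion.mp hz
          exact hpairsub e (hF'sub he) hze
        have hsdcard : (A \ EP').card = (σ - x - 1) := by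
          rw [card_sdiff_of_subset hEP'A, hEP'card]
          omega
        set wit : V × V → V := fun e =>
          if h : Ped e then h.2.2.2.choose else r with hwit
        have hwitspec : ∀ e ∈ F', wit e ≠ r ∧ (e.1 = wit e ∨ G.Adj (wit e) e.1) ∧
            (e.2 = wit e ∨ G.Adj (wit e) e.2) := by
          intro e he
          have hp := hF'Ped e he
          simp only [hwit, dif_pos hp]
          exact ⟨hp.2.2.2.choose_spec.1, hp.2.2.2.choose_spec.2.1, hp.2.2.2.choose_spec.2.2⟩
        refine ⟨r, hrW, (F'.image wit) ∪ (A \ EP'), ?_, ?_, ?_⟩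
        · have h1 : (F'.image wit).card ≤ x + 1 := le_trans (card_image_le) (le_of_eq hF'card)
          have h2 := card_union_le (F'.image wit) (A \ EP')
          omega
        · intro hrS
          rcases mem_union.mp hrS with h | h
          · obtain ⟨e, he, hwe⟩ := mem_image.mp h
            exact (hwitspec e he).1 hwe
          · exact hrA (mem_sdiff.mp h).1
        · intro u huW hur
          have hne : (A \ EP').Nonempty := by
            rw [← card_pos, hsdcard]; omega
          rcases hur with rfl | hadj
          · obtain ⟨y, hy⟩ := hne
            have hyA : y ∈ A := (mem_sdiff.mp hy).1
            exact ⟨y, mem_union_right _ hy, Or.inr (hAmem y hyA).2.symm⟩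
          · have huA : u ∈ A := mem_filter.mpr ⟨huW, hadj⟩
            rcases em (u ∈ EP') with hu | hu
            · obtain ⟨e, he, hue⟩ := mem_biUnion.mp hu
              refine ⟨wit e, mem_union_left _ (mem_image_of_mem wit he), ?_⟩
              rcases mem_insert.mp hue with rfl | hue
              · exact (hwitspec e he).2.1
              · rw [mem_singleton.mp hue]
                exact (hwitspec e he).2.2
            · exact ⟨u, mem_union_right _ (mem_sdiff.mpr ⟨huA, hu⟩), Or.inl rfl⟩
      · -- few disjoint pairs : sunflower removal
        set EP : Finset V := F.biUnion (fun e => ({e.1, e.2} : Finset V)) with hEP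
        have hEPle : EP.card ≤ 2 * F.card := by
          calc EP.card ≤ ∑ e ∈ F, ({e.1, e.2} : Finset V).card := card_biUnion_le
            _ ≤ ∑ _e ∈ F, 2 := Finset.sum_le_sum (fun e _ => card_insert_le _ _)
            _ = 2 * F.card := by rw [Finset.sum_const, smul_eq_mul]; ring
        set U : Finset V := A \ EP with hU
        have hUA : U ⊆ A := sdiff_subset
        have hUcard : a ≤ U.card := by
          have h1 : A.card - EP.card ≤ U.card := le_card_sdiff EP A
          have h2 : A.card = σ + 1 + x := by rw [← hd, hx]
          omega
        obtain ⟨I₀, hI₀U, hI₀card⟩ := U.exists_subset_card_eq hUcard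
        have hI₀A : I₀ ⊆ A := fun i hi => hUA (hI₀U hi)
        have hI₀W : I₀ ⊆ W := fun i hi => hAsubW (hI₀A hi)
        -- independence: no two members of I₀ are co-covered by a non-r vertex
        have hind : ∀ i ∈ I₀, ∀ j ∈ I₀, i ≠ j → ∀ w, w ≠ r →
            ¬((i = w ∨ G.Adj w i) ∧ (j = w ∨ G.Adj w j)) := by
          intro i hi j hj hij w hw hcon
          have hiEP : i ∉ EP := (mem_sdiff.mp (hI₀U hi)).2
          have hjEP : j ∉ EP := (mem_sdiff.mp (hI₀U hj)).2
          have hnew : Ped (i, j) := ⟨hI₀A hi, hI₀A hj, hij, w, hw, hcon.1, hcon.2⟩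
          have hnotF : (i, j) ∉ F := by
            intro hmem
            exact hiEP (mem_biUnion.mpr ⟨(i,j), hmem, by simp⟩)
          have hvF'' : Valid (insert (i,j) F) := by
            constructor
            · intro e he
              rcases mem_insert.mp he with rfl | he
              · exact hnew
              · exact hFValid.1 e he
            · intro e he e' he' hee
              have hdisj : ∀ e₀ ∈ F, Disjoint ({i, j} : Finset V) ({e₀.1, e₀.2} : Finset V) := by
                intro e₀ he₀
                rw [disjoint_left]
                intro z hz hz'
                have hzEP : z ∈ EP := mem_biUnion.mpr ⟨e₀, he₀, hz'⟩
                rcases mem_insert.mp hz with rfl | hz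
                · exact hiEP hzEP
                · rw [mem_singleton.mp hz] at hzEP; exact hjEP hzEP
              rcases mem_insert.mp he with rfl | he <;>
                rcases mem_insert.mp he' with he'a | he'
              · exact absurd he'a.symm hee
              · exact hdisj e' he'
              · rw [he'a]; exact (hdisj e he).symm
              · exact hFValid.2 e he e' he' hee
          have hc := hFmax _ hvF''
          rw [card_insert_of_notMem hnotF] at hc
          omega
        -- the sunflower of closed balls through r
        set B : V → Finset V := fun i => W.filter (fun u => u = i ∨ G.Adj i u) with hB
        have hBW : ∀ i, B i ⊆ W := fun i => filter_subset _ _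
        have hBr : ∀ i ∈ I₀, r ∈ B i :=
          fun i hi => mem_filter.mpr ⟨hrW, Or.inr (hAmem i (hI₀A hi)).2.symm⟩
        have hiBi : ∀ i ∈ I₀, i ∈ B i :=
          fun i hi => mem_filter.mpr ⟨hI₀W hi, Or.inl rfl⟩
        have hBcard : ∀ i ∈ I₀, d + 1 ≤ (B i).card := by
          intro i hi
          have h1 : insert i (W.filter (fun u => G.Adj i u)) ⊆ B i := by
            intro z hz
            rcases mem_insert.mp hz with hz | hz
            · rw [hz]; exact hiBi i hi
            · exact mem_filter.mpr ⟨(mem_filter.mp hz).1, Or.inr (mem_filter.mp hz).2⟩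
          have h2 : i ∉ W.filter (fun u => G.Adj i u) := by
            simp only [mem_filter]
            rintro ⟨-, h⟩; exact G.irrefl h
          have h3 := card_le_card h1
          rw [card_insert_of_notMem h2] at h3
          have h4 := hrmin i (hI₀W hi)
          omega
        have hBdisj : ∀ i ∈ I₀, ∀ j ∈ I₀, i ≠ j →
            Disjoint ((B i).erase r) ((B j).erase r) := by
          intro i hi j hj hij
          rw [disjoint_left]
          intro z hzi hzj
          have hz1 := mem_erase.mp hzi
          have hz2 := mem_erase.mp hzj
          have h1 := (mem_filter.mp hz1.2).2
          have h2 := (mem_filter.mp hz2.2).2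
          refine hind i hi j hj hij z hz1.1 ⟨?_, ?_⟩
          · rcases h1 with rfl | h
            · exact Or.inl rfl
            · exact Or.inr h.symm
          · rcases h2 with rfl | h
            · exact Or.inl rfl
            · exact Or.inr h.symm
        set UB : Finset V := I₀.biUnion B with hUB
        have hUBW : UB ⊆ W := by
          intro z hz
          obtain ⟨i, hi, hzi⟩ := mem_biUnion.mp hz
          exact hBW i hzi
        have hUBcard : a * (σ + 1 + x) + 1 ≤ UB.card := by
          have hsub : insert r (I₀.biUnion (fun i => (B i).erase r)) ⊆ UB := by
            intro z hz
            rcases mem_insert.mp hz with rfl | hz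
            · obtain ⟨i₀, hi₀⟩ := card_pos.mp (by omega : 0 < I₀.card)
              exact mem_biUnion.mpr ⟨i₀, hi₀, hBr i₀ hi₀⟩
            · obtain ⟨i, hi, hzi⟩ := mem_biUnion.mp hz
              exact mem_biUnion.mpr ⟨i, hi, (mem_erase.mp hzi).2⟩
          have hrnot : r ∉ I₀.biUnion (fun i => (B i).erase r) := by
            intro h
            obtain ⟨i, hi, hri⟩ := mem_biUnion.mp h
            exact (mem_erase.mp hri).1 rfl
          have h1 := card_le_card hsub
          rw [card_insert_of_notMem hrnot, card_biUnion hBdisj] at h1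
          have h2 : ∀ i ∈ I₀, d ≤ ((B i).erase r).card := by
            intro i hi
            rw [card_erase_of_mem (hBr i hi)]
            have := hBcard i hi
            omega
          have h3 : I₀.card * d ≤ ∑ i ∈ I₀, ((B i).erase r).card := by
            calc I₀.card * d = ∑ _i ∈ I₀, d := by rw [Finset.sum_const, smul_eq_mul]
              _ ≤ ∑ i ∈ I₀, ((B i).erase r).card := Finset.sum_le_sum h2
          rw [hI₀card] at h3
          have hda : d = σ + 1 + x := hx
          calc a * (σ + 1 + x) + 1 = a * d + 1 := by rw [hda]
            _ ≤ (∑ i ∈ I₀, ((B i).erase r).card) + 1 := by omega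
            _ ≤ UB.card := h1
        have hWub : UB.card ≤ W.card := card_le_card hUBW
        have e1 : a * (σ + 1 + x) = a*a + 2*(a*x) := by
          have h : σ + 1 + x = x + a + x := by omega
          rw [h]; ring
        have e2 : σ^2 + 2*σ + 1 = x*x + 2*(a*x) + a*a := by
          calc σ^2 + 2*σ + 1 = (σ+1)*(σ+1) := by ring
            _ = (x+a)*(x+a) := by rw [ha]
            _ = x*x + 2*(a*x) + a*a := by ring
        have hxx : 2 ≤ x*x := by linarith [hUBcard, hWub, hWcard]
        have hx2 : 2 ≤ x := by
          rcases Nat.lt_or_ge x 2 with h | h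
          · interval_cases x <;> norm_num at hxx
          · exact h
        set W' : Finset V := W \ UB with hW'
        have hW'card : W'.card + UB.card = W.card := card_sdiff_add_card_eq_card hUBW
        have hW'le : W'.card ≤ (x-1)^2 + 2*(x-1) := by
          obtain ⟨y, hy⟩ : ∃ y, x = y + 2 := ⟨x - 2, by omega⟩
          have e3 : x - 1 = y + 1 := by omega
          rw [e3]
          have e4 : (y+1)^2 + 2*(y+1) = y*y + 4*y + 3 := by ring
          rw [e4]
          have e5 : x*x = y*y + 4*y + 4 := by rw [hy]; ring
          have h3 : W'.card + 2 ≤ x*x := by linarith [hUBcard, hWcard, hW'card, hWub]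
          linarith [h3, e5]
        rcases W'.eq_empty_or_nonempty with hW'e | hW'ne
        · -- whole of W is inside the sunflower: trap at r with cops I₀
          refine ⟨r, hrW, I₀, ?_, ?_, ?_⟩
          · rw [hI₀card]; omega
          · intro h; exact hrA (hI₀A h)
          · intro u huW _
            have huUB : u ∈ UB := by
              by_contra h
              have : u ∈ W' := mem_sdiff.mpr ⟨huW, h⟩
              rw [hW'e] at this
              exact notMem_empty u this
            obtain ⟨i, hi, hui⟩ := mem_biUnion.mp huUB
            have := (mem_filter.mp hui).2
            exact ⟨i, hi, by tauto⟩
        · obtain ⟨r', hr'W', S', hS'card, hr'S', hcov'⟩ :=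
            IH (x-1) (by omega) W' hW'ne hW'le
          have hr'W : r' ∈ W := (mem_sdiff.mp hr'W').1
          have hr'UB : r' ∉ UB := (mem_sdiff.mp hr'W').2
          refine ⟨r', hr'W, S' ∪ I₀, ?_, ?_, ?_⟩
          · have h1 := card_union_le S' I₀
            rw [hI₀card] at h1
            omega
          · intro h
            rcases mem_union.mp h with h | h
            · exact hr'S' h
            · exact hr'UB (mem_biUnion.mpr ⟨r', h, hiBi r' h⟩)
          · intro u huW hur
            rcases em (u ∈ UB) with hu | hu
            · obtain ⟨i, hi, hui⟩ := mem_biUnion.mp hu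
              have := (mem_filter.mp hui).2
              exact ⟨i, mem_union_right _ hi, by tauto⟩
            · obtain ⟨w, hwS', hw⟩ := hcov' u (mem_sdiff.mpr ⟨huW, hu⟩) hur
              exact ⟨w, mem_union_left _ hwS', hw⟩

lemma exists_pad {V : Type*} (S : Finset V) (hne : S.Nonempty) (k : ℕ) (hk : S.card ≤ k) :
    ∃ c : Fin k → V, (∀ i, c i ∈ S) ∧ ∀ w ∈ S, ∃ i, c i = w := by
  classical
  obtain ⟨s₀, hs₀⟩ := hne
  refine ⟨fun i => S.toList.getD i s₀, ?_, ?_⟩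
  · intro i
    show S.toList.getD i s₀ ∈ S
    rcases Nat.lt_or_ge i.val S.toList.length with h | h
    · rw [List.getD_eq_getElem _ _ h]
      exact Finset.mem_toList.mp (List.getElem_mem h)
    · rw [List.getD_eq_default _ _ h]
      exact hs₀
  · intro w hw
    obtain ⟨n, hn, hnw⟩ := List.mem_iff_getElem.mp (Finset.mem_toList.mpr hw)
    have hlen : S.toList.length = S.card := Finset.length_toList S
    refine ⟨⟨n, by omega⟩, ?_⟩
    show S.toList.getD n s₀ = w
    rw [List.getD_eq_getElem _ _ (by simpa using hn)]
    exact hnw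

lemma win_all_s12 {V : Type*} [Fintype V] (G : SimpleGraph V)
    (hmin : ∀ v : V, ∃ u, G.Adj v u)
    {s : ℕ} (hs : 1 ≤ s) (hcard : Fintype.card V ≤ s^2 + 2*s) :
    ∀ (r : V) (c : Fin s → V), TCopsWinFrom G c r := by
  classical
  have main : ∀ W : Finset V, (∀ v, v ∉ W → ∀ c : Fin s → V, TCopsWinFrom G c v) →
      ∀ v, ∀ c : Fin s → V, TCopsWinFrom G c v := by
    intro W
    induction W using Finset.strongInduction with
    | _ W IH =>
    intro hout v c
    by_cases hvW : v ∈ W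
    · obtain ⟨r, hrW, S, hScard, hrS, hcov⟩ :=
        trap_lemma G hmin s W ⟨v, hvW⟩
          (le_trans (card_le_univ W) (by simpa using hcard))
      have hSne : S.Nonempty := by
        obtain ⟨w, hwS, -⟩ := hcov r hrW (Or.inl rfl)
        exact ⟨w, hwS⟩
      have hwin_r : ∀ c0 : Fin s → V, TCopsWinFrom G c0 r := by
        intro c0
        obtain ⟨c', hc'S, hc'sur⟩ := exists_pad S hSne s hScard
        refine TCopsWinFrom.step _ _ c' (fun i h => hrS (h ▸ hc'S i)) ?_
        intro r' hmov hnc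
        have hr'W : r' ∉ W := by
          intro hr'W
          obtain ⟨w, hwS, hw⟩ := hcov r' hr'W hmov
          obtain ⟨i, hi⟩ := hc'sur w hwS
          exact hnc ⟨i, by rw [hi]; exact hw⟩
        exact hout r' hr'W c'
      refine IH (W.erase r) (erase_ssubset hrW) ?_ v c
      intro u hu c1
      by_cases hur : u = r
      · exact hur ▸ hwin_r c1
      · exact hout u (fun huW => hu (mem_erase.mpr ⟨hur, huW⟩)) c1
    · exact hout v hvW c
  exact fun r c => main univ (fun u hu => absurd (mem_univ u) hu) r c

lemma isolated_no_win {V : Type*} (G : SimpleGraph V) {k : ℕ} {w : V}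
    (hw : ∀ u, ¬ G.Adj w u) :
    ∀ (c : Fin k → V) (r : V), TCopsWinFrom G c r → r ≠ w := by
  intro c r h
  induction h with
  | step c r c' hmove hstep IH =>
    rintro rfl
    refine IH r (Or.inl rfl) ?_ rfl
    rintro ⟨i, hi | hi⟩
    · exact hmove i hi.symm
    · exact hw (c' i) (G.adj_symm hi)

/-- For every graph `G` on `n` vertices, the teleporting cop number is at most `√n`. -/
theorem stmt_12 {V : Type*} [Fintype V] (G : SimpleGraph V) :
    (tCopNumber G : ℝ) ≤ Real.sqrt (Fintype.card V) := by
  classical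
  rcases Nat.eq_zero_or_pos (Fintype.card V) with hcard0 | hcardpos
  · -- empty vertex type
    haveI : IsEmpty V := Fintype.card_eq_zero_iff.mp hcard0
    have hwin : TCopsWin G 0 := ⟨fun i => i.elim0, fun r₀ => (IsEmpty.false r₀).elim⟩
    have h0 : tCopNumber G = 0 := Nat.le_zero.mp (Nat.sInf_le hwin)
    rw [h0]
    simpa using Real.sqrt_nonneg _
  · by_cases hiso : ∃ w : V, ∀ u, ¬ G.Adj w u
    · obtain ⟨w, hw⟩ := hiso
      have hempty : {k | TCopsWin G k} = ∅ := by
        ext k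
        simp only [Set.mem_setOf_eq, Set.mem_empty_iff_false, iff_false]
        rintro ⟨c₀, hc⟩
        exact isolated_no_win G hw c₀ w (hc w) rfl
      have h0 : tCopNumber G = 0 := by
        rw [tCopNumber, hempty, Nat.sInf_empty]
      rw [h0]
      simpa using Real.sqrt_nonneg _
    · push_neg at hiso
      have hmin : ∀ v : V, ∃ u, G.Adj v u := hiso
      set s : ℕ := Nat.sqrt (Fintype.card V) with hsdef
      have hs1 : 1 ≤ s := Nat.sqrt_pos.mpr hcardpos
      have hcard : Fintype.card V ≤ s^2 + 2*s := by
        have h1 := Nat.lt_succ_sqrt' (Fintype.card V)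
        rw [← hsdef] at h1
        have h2 : s.succ ^ 2 = s^2 + 2*s + 1 := by
          rw [Nat.succ_eq_add_one]; ring
        omega
      haveI : Nonempty V := Fintype.card_pos_iff.mp hcardpos
      have hwin : TCopsWin G s :=
        ⟨fun _ => Classical.arbitrary V, fun r₀ => win_all_s12 G hmin hs1 hcard r₀ _⟩
      have hle : tCopNumber G ≤ s := Nat.sInf_le hwin
      have hsle : (s : ℝ) ≤ Real.sqrt (Fintype.card V) := by
        have h1 : (s : ℝ)^2 ≤ (Fintype.card V : ℝ) := by
          have h2 : (s^2 : ℕ) ≤ Fintype.card V := by rw [hsdef]; exact Nat.sqrt_le' _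
          exact_mod_cast h2
        calc (s : ℝ) = Real.sqrt ((s:ℝ)^2) := (Real.sqrt_sq (by positivity)).symm
          _ ≤ Real.sqrt (Fintype.card V) := Real.sqrt_le_sqrt h1
      calc (tCopNumber G : ℝ) ≤ (s : ℝ) := by exact_mod_cast hle
        _ ≤ _ := hsle
end

section
/- Let G be a graph on n vertices and suppose v is a vertex of G with degree at least 2⌊√n⌋. If the induced subgraph G' = G − N[v] (deleting v and all its neighbors) has a vertex which is a ⌊√(n − 2⌊√n⌋ − 1)⌋-trap in G', then v's removal yields that G has a √n-trap using one extra cop; formally, if G' has an s-trap with s = √(|V(G')|), then G has a (1 + ⌊s⌋)-trap, and 1 + ⌊s⌋ ≤ ⌊√n⌋. -/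
/-- The graph `H` has an `s`-trap: a vertex `v` and at most `⌊s⌋` cops placed away
from `v` controlling all neighbors of `v`. -/
def HasTrap {α : Type*} (H : SimpleGraph α) (s : ℝ) : Prop :=
  ∃ v : α, ∃ S : Finset α, v ∉ S ∧ S.card ≤ ⌊s⌋₊ ∧
    ∀ u, H.Adj v u → ∃ c ∈ S, u = c ∨ H.Adj c u

/-- High-degree case of the trap induction: if `v` has degree at least `2⌊√n⌋` and the
graph `G' = G − N[v]` has an `s`-trap with `s = √|V(G')|`, then `G` has a
`(1 + ⌊s⌋)`-trap, and `1 + ⌊s⌋ ≤ ⌊√n⌋`. -/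
theorem stmt_15 {V : Type*} [Fintype V] (G : SimpleGraph V) [DecidableRel G.Adj]
    (v : V) (hdeg : 2 * ⌊Real.sqrt (Fintype.card V)⌋₊ ≤ G.degree v)
    (A : Set V) (hA : A = {u : V | u ≠ v ∧ ¬G.Adj v u})
    (htrap : HasTrap (G.induce A) (Real.sqrt A.ncard)) :
    HasTrap G (1 + ⌊Real.sqrt A.ncard⌋₊ : ℕ) ∧
      1 + ⌊Real.sqrt A.ncard⌋₊ ≤ ⌊Real.sqrt (Fintype.card V)⌋₊ := by
  classical
  obtain ⟨w, S, hwS, hcard, hcop⟩ := htrap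
  set n := Fintype.card V with hn
  set k := ⌊Real.sqrt n⌋₊ with hk
  clear_value n k
  have hwA : (w : V) ∈ A := w.2
  have hwv : (w : V) ≠ v := ((Set.ext_iff.mp hA (w : V)).mp w.2).1
  constructor
  · refine ⟨(w : V), insert v (S.image Subtype.val), ?_, ?_, ?_⟩
    · intro hmem
      rcases Finset.mem_insert.mp hmem with h | h
      · exact hwv h
      · obtain ⟨c, hc, hcw⟩ := Finset.mem_image.mp h
        exact hwS (by rwa [show c = w from Subtype.ext hcw] at hc)
    · calc (insert v (S.image Subtype.val)).card
          ≤ (S.image Subtype.val).card + 1 := Finset.card_insert_le _ _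
        _ ≤ S.card + 1 := by gcongr; exact Finset.card_image_le
        _ ≤ ⌊Real.sqrt A.ncard⌋₊ + 1 := by omega
        _ ≤ ⌊((1 + ⌊Real.sqrt A.ncard⌋₊ : ℕ) : ℝ)⌋₊ := by
            rw [Nat.floor_natCast]; omega
    · intro u hu
      by_cases huA : u ∈ A
      · have hadj : (G.induce A).Adj w ⟨u, huA⟩ := hu
        obtain ⟨c, hc, hcu⟩ := hcop ⟨u, huA⟩ hadj
        refine ⟨(c : V), Finset.mem_insert_of_mem (Finset.mem_image_of_mem _ hc), ?_⟩
        rcases hcu with h | h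
        · exact Or.inl (congrArg Subtype.val h)
        · exact Or.inr h
      · refine ⟨v, Finset.mem_insert_self _ _, ?_⟩
        rw [hA] at huA
        simp only [Set.mem_setOf_eq, not_and, not_not, ne_eq] at huA
        by_cases huv : u = v
        · exact Or.inl huv
        · exact Or.inr (huA huv)
  · -- cardinality bound
    have hAfin : A.toFinset = (insert v (G.neighborFinset v))ᶜ := by
      ext u
      simp [hA, SimpleGraph.mem_neighborFinset, eq_comm, G.adj_comm]
    have hvn : v ∉ G.neighborFinset v := by simp
    have hAcard : A.ncard = n - (G.degree v + 1) := by
      rw [Set.ncard_eq_toFinset_card', hAfin, Finset.card_compl,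
        Finset.card_insert_of_notMem hvn, SimpleGraph.card_neighborFinset_eq_degree, ← hn]
    have hk1 : 1 ≤ k := by
      have : Nonempty V := ⟨v⟩
      have hpos : 0 < n := hn ▸ Fintype.card_pos
      rw [hk, Nat.le_floor_iff (Real.sqrt_nonneg _)]
      have : (1:ℝ) ≤ (n:ℝ) := by exact_mod_cast hpos
      push_cast
      nlinarith [Real.sq_sqrt (show (0:ℝ) ≤ n by positivity), Real.sqrt_nonneg (n:ℝ)]
    have hnlt : n < (k + 1) ^ 2 := by
      have h1 : Real.sqrt n < k + 1 := hk ▸ Nat.lt_floor_add_one _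
      have h2 : (n : ℝ) < ((k:ℝ) + 1) ^ 2 := by
        nlinarith [Real.sq_sqrt (show (0:ℝ) ≤ n by positivity), Real.sqrt_nonneg (n:ℝ)]
      exact_mod_cast (by push_cast; linarith : (n:ℝ) < ((k + 1 : ℕ) : ℝ) ^ 2)
    have hAlt : A.ncard < k ^ 2 := by
      have hdeg' : 2 * k ≤ G.degree v := hdeg
      have : A.ncard ≤ n - (2 * k + 1) := by
        rw [hAcard]; omega
      have hn2 : n ≤ k ^ 2 + 2 * k := by nlinarith
      have hksq : 1 ≤ k ^ 2 := Nat.one_le_pow 2 k hk1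
      omega
    have hfloor : ⌊Real.sqrt A.ncard⌋₊ < k := by
      rw [Nat.floor_lt (Real.sqrt_nonneg _)]
      have : Real.sqrt A.ncard < Real.sqrt (k ^ 2) := by
        apply Real.sqrt_lt_sqrt (by positivity)
        exact_mod_cast hAlt
      rwa [show ((k:ℝ))^2 = (k:ℝ)^2 from rfl, Real.sqrt_sq (by positivity)] at this
    omega
end

section
/- Let G be a graph and suppose vertex u is an (α−1)-trap in the induced subgraph G − {v} for some vertex v ≠ u which is a √n-trap in G. Then u is an α-trap in G, for any real α ≥ 1. -/
/-- `w` is an `s`-trap in the graph `H`: at most `⌊s⌋` cops can be placed away from `w`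
so that every neighbor of `w` is in the closed neighborhood of some cop. -/
def IsTrap {α : Type*} (H : SimpleGraph α) (s : ℝ) (w : α) : Prop :=
  ∃ S : Finset α, w ∉ S ∧ S.card ≤ ⌊s⌋₊ ∧ ∀ u, H.Adj w u → ∃ c ∈ S, u = c ∨ H.Adj c u

/-- If `u` is an `(α−1)`-trap in `G − {v}`, where `v ≠ u` is a `√n`-trap in `G`, then
`u` is an `α`-trap in `G`, for any real `α ≥ 1`. -/
theorem stmt_16 {V : Type*} [Fintype V] (G : SimpleGraph V) (α : ℝ) (hα : 1 ≤ α)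
    (v u : V) (hvu : v ≠ u)
    (hv : IsTrap G (Real.sqrt (Fintype.card V)) v)
    (hu : IsTrap (G.induce {x : V | x ≠ v}) (α - 1) ⟨u, hvu.symm⟩) :
    IsTrap G α u := by
  obtain ⟨S, huS, hcard, hcov⟩ := hu
  classical
  refine ⟨insert v (S.image Subtype.val), ?_, ?_, ?_⟩
  · simp only [Finset.mem_insert, Finset.mem_image, not_or]
    refine ⟨hvu.symm, ?_⟩
    rintro ⟨⟨x, hx⟩, hxS, rfl⟩
    exact huS hxS
  · have h1 : (insert v (S.image Subtype.val)).card ≤ S.card + 1 := by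
      calc (insert v (S.image Subtype.val)).card ≤ (S.image Subtype.val).card + 1 :=
            Finset.card_insert_le _ _
        _ ≤ S.card + 1 := by gcongr; exact Finset.card_image_le
    have h2 : ⌊α - 1⌋₊ + 1 ≤ ⌊α⌋₊ := by
      have : ⌊α - 1⌋₊ = ⌊α⌋₊ - 1 := by
        simpa using Nat.floor_sub_nat α 1
      have h3 : 1 ≤ ⌊α⌋₊ := Nat.le_floor (by simpa using hα)
      omega
    omega
  · intro x hx
    by_cases hxv : x = v
    · exact ⟨v, Finset.mem_insert_self _ _, Or.inl hxv⟩
    · obtain ⟨c, hcS, hc⟩ := hcov ⟨x, hxv⟩ (by simpa using hx)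
      refine ⟨c.val, Finset.mem_insert_of_mem (Finset.mem_image_of_mem _ hcS), ?_⟩
      rcases hc with h | h
      · exact Or.inl (congrArg Subtype.val h)
      · exact Or.inr (by simpa using h)
end
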